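/- arXiv:2405.05222 — 3 statements merged into one kernel-verified Lean document; each statement's English description precedes it below -/
import Mathlib

section
/- Let (D,F) be a pair with F = (f₁,…,f_s), let X ⊆ V(D), let α be an F-dicolouring of D[X], and let (D',F') be the pair reduced from (D,F) by α. Then for every F'-dicolouring β of D' = D − X, the colouring γ of D defined by γ = α on X and γ = β on V(D)∖X is an F-dicolouring of D. -/
open scoped Classical

/-- A finite digraph with vertex set a `Finset ℕ` and no loops.
Both arcs `(u,v)` and `(v,u)` may be present (a digon). -/
structure Digraph' where
  verts : Finset ℕ
  arcs : Finset (ℕ × ℕ)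
  mem_fst : ∀ a ∈ arcs, a.1 ∈ verts
  mem_snd : ∀ a ∈ arcs, a.2 ∈ verts
  no_loops : ∀ a ∈ arcs, a.1 ≠ a.2

namespace Digraph'

/-- In-degree of `v`. -/
def inDeg (D : Digraph') (v : ℕ) : ℕ := (D.arcs.filter fun a => a.2 = v).card

/-- Out-degree of `v`. -/
def outDeg (D : Digraph') (v : ℕ) : ℕ := (D.arcs.filter fun a => a.1 = v).card

/-- In-neighbourhood of `v`. -/
def inNbrs (D : Digraph') (v : ℕ) : Finset ℕ := (D.arcs.filter fun a => a.2 = v).image Prod.fst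

/-- Out-neighbourhood of `v`. -/
def outNbrs (D : Digraph') (v : ℕ) : Finset ℕ := (D.arcs.filter fun a => a.1 = v).image Prod.snd

/-- Neighbourhood of `v` in the underlying graph. -/
def ugNbrs (D : Digraph') (v : ℕ) : Finset ℕ := D.inNbrs v ∪ D.outNbrs v

/-- `H` is a subdigraph of `D`. -/
def IsSubdigraph (H D : Digraph') : Prop := H.verts ⊆ D.verts ∧ H.arcs ⊆ D.arcs

/-- The subdigraph of `D` induced by the vertex set `X`. -/
def induce (D : Digraph') (X : Finset ℕ) : Digraph' where
  verts := D.verts ∩ X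
  arcs := D.arcs.filter fun a => a.1 ∈ X ∧ a.2 ∈ X
  mem_fst := fun a ha => by
    simp only [Finset.mem_filter] at ha
    exact Finset.mem_inter.mpr ⟨D.mem_fst a ha.1, ha.2.1⟩
  mem_snd := fun a ha => by
    simp only [Finset.mem_filter] at ha
    exact Finset.mem_inter.mpr ⟨D.mem_snd a ha.1, ha.2.2⟩
  no_loops := fun a ha => by
    simp only [Finset.mem_filter] at ha
    exact D.no_loops a ha.1

/-- `D − X`, the digraph obtained from `D` by deleting the vertices of `X`. -/
def del (D : Digraph') (X : Finset ℕ) : Digraph' := D.induce (D.verts \ X)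

/-- Adjacency in the underlying graph of `D`. -/
def ugAdj (D : Digraph') (u v : ℕ) : Prop :=
  u ∈ D.verts ∧ v ∈ D.verts ∧ ((u, v) ∈ D.arcs ∨ (v, u) ∈ D.arcs)

/-- `D` is connected, i.e. its underlying graph is connected. -/
def Connected (D : Digraph') : Prop :=
  D.verts.Nonempty ∧ ∀ u ∈ D.verts, ∀ v ∈ D.verts, Relation.ReflTransGen D.ugAdj u v

/-- `D` is biconnected: it has at least two vertices, is connected, and stays
connected after the deletion of any vertex. -/
def Biconnected (D : Digraph') : Prop :=
  2 ≤ D.verts.card ∧ D.Connected ∧ ∀ x ∈ D.verts, (D.del {x}).Connected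

/-- Every arc of `D` lies in a digon. -/
def Bidirected (D : Digraph') : Prop := ∀ a ∈ D.arcs, (a.2, a.1) ∈ D.arcs

/-- The underlying graph of `D` is a cycle. -/
def IsCycleUG (D : Digraph') : Prop :=
  D.Connected ∧ ∀ v ∈ D.verts, (D.ugNbrs v).card = 2

/-- `D` is a bidirected odd cycle. -/
def BidirectedOddCycle (D : Digraph') : Prop :=
  D.Bidirected ∧ D.IsCycleUG ∧ Odd D.verts.card

/-- `D` is a bidirected complete graph. -/
def BidirectedComplete (D : Digraph') : Prop :=
  ∀ u ∈ D.verts, ∀ v ∈ D.verts, u ≠ v → (u, v) ∈ D.arcs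

/-- `D` is strictly-`f`-bidegenerate: every nonempty subdigraph `H` of `D` contains a
vertex `v` with `d⁻_H(v) < f⁻(v)` or `d⁺_H(v) < f⁺(v)`. -/
def StrictlyBidegenerate (D : Digraph') (f : ℕ → ℕ × ℕ) : Prop :=
  ∀ H : Digraph', H.IsSubdigraph D → H.verts.Nonempty →
    ∃ v ∈ H.verts, H.inDeg v < (f v).1 ∨ H.outDeg v < (f v).2

/-- `α` is an `F`-dicolouring of `D`: for each colour `i`, the subdigraph induced by the
vertices coloured `i` is strictly-`Fᵢ`-bidegenerate. -/
def IsDicolouring (D : Digraph') (s : ℕ) (F : Fin s → ℕ → ℕ × ℕ) (α : ℕ → Fin s) : Prop :=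
  ∀ i : Fin s, (D.induce (D.verts.filter fun v => α v = i)).StrictlyBidegenerate (F i)

/-- `D` is `F`-dicolourable. -/
def Dicolourable (D : Digraph') (s : ℕ) (F : Fin s → ℕ → ℕ × ℕ) : Prop :=
  ∃ α : ℕ → Fin s, D.IsDicolouring s F α

/-- `(D,F)` is a valid pair: `D` is connected and the colour budget dominates the
in- and out-degrees at every vertex. -/
def ValidPair (D : Digraph') (s : ℕ) (F : Fin s → ℕ → ℕ × ℕ) : Prop :=
  D.Connected ∧ ∀ v ∈ D.verts,
    D.inDeg v ≤ ∑ i, (F i v).1 ∧ D.outDeg v ≤ ∑ i, (F i v).2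

/-- `(D,F)` is tight: both budget inequalities are equalities at every vertex. -/
def Tight (D : Digraph') (s : ℕ) (F : Fin s → ℕ → ℕ × ℕ) : Prop :=
  ∀ v ∈ D.verts, ∑ i, (F i v).1 = D.inDeg v ∧ ∑ i, (F i v).2 = D.outDeg v

/-- Hard pairs, defined inductively: monochromatic, bicycle, complete, and join hard pairs. -/
inductive IsHardPair : (s : ℕ) → Digraph' → (Fin s → ℕ → ℕ × ℕ) → Prop
  | mono {s : ℕ} {D : Digraph'} {F : Fin s → ℕ → ℕ × ℕ} (i : Fin s)
      (hbi : D.Biconnected)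
      (hi : ∀ v ∈ D.verts, F i v = (D.inDeg v, D.outDeg v))
      (hk : ∀ k : Fin s, k ≠ i → ∀ v ∈ D.verts, F k v = (0, 0)) :
      IsHardPair s D F
  | bicycle {s : ℕ} {D : Digraph'} {F : Fin s → ℕ → ℕ × ℕ} (i j : Fin s) (hij : i ≠ j)
      (hD : D.BidirectedOddCycle)
      (hi : ∀ v ∈ D.verts, F i v = (1, 1))
      (hj : ∀ v ∈ D.verts, F j v = (1, 1))
      (hk : ∀ k : Fin s, k ≠ i → k ≠ j → ∀ v ∈ D.verts, F k v = (0, 0)) :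
      IsHardPair s D F
  | complete {s : ℕ} {D : Digraph'} {F : Fin s → ℕ → ℕ × ℕ}
      (hD : D.BidirectedComplete)
      (hconst : ∀ k : Fin s, ∀ u ∈ D.verts, ∀ v ∈ D.verts, F k u = F k v)
      (hsym : ∀ k : Fin s, ∀ v ∈ D.verts, (F k v).1 = (F k v).2)
      (hsum : ∀ v ∈ D.verts, ∑ k, (F k v).2 = D.verts.card - 1) :
      IsHardPair s D F
  | join {s : ℕ} {D : Digraph'} {F : Fin s → ℕ → ℕ × ℕ}
      (D₁ D₂ : Digraph') (F₁ F₂ : Fin s → ℕ → ℕ × ℕ) (x : ℕ)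
      (h₁ : IsHardPair s D₁ F₁) (h₂ : IsHardPair s D₂ F₂)
      (hx : D₁.verts ∩ D₂.verts = {x})
      (hV : D.verts = D₁.verts ∪ D₂.verts)
      (hA : D.arcs = D₁.arcs ∪ D₂.arcs)
      (hF₁ : ∀ k : Fin s, ∀ v ∈ D₁.verts, v ≠ x → F k v = F₁ k v)
      (hF₂ : ∀ k : Fin s, ∀ v ∈ D₂.verts, v ≠ x → F k v = F₂ k v)
      (hFx : ∀ k : Fin s, F k x = ((F₁ k x).1 + (F₂ k x).1, (F₁ k x).2 + (F₂ k x).2)) :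
      IsHardPair s D F

/-- The sequence of functions of the pair reduced from `(D,F)` by a colouring `α` of
`X ⊆ V(D)`: the budget of colour `i` at `u` decreases by the number of in- and out-neighbours
of `u` inside `X` coloured `i` (truncated at `0`). -/
def reduceF (D : Digraph') {s : ℕ} (F : Fin s → ℕ → ℕ × ℕ) (X : Finset ℕ) (α : ℕ → Fin s) :
    Fin s → ℕ → ℕ × ℕ :=
  fun i u =>
    ((F i u).1 - ((D.inNbrs u ∩ X).filter fun w => α w = i).card,
     (F i u).2 - ((D.outNbrs u ∩ X).filter fun w => α w = i).card)

/-- `B` is a block of `D`: a maximal biconnected subdigraph. -/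
def IsBlock (B D : Digraph') : Prop :=
  B.IsSubdigraph D ∧ B.Biconnected ∧
    ∀ B' : Digraph', B'.IsSubdigraph D → B'.Biconnected → B.IsSubdigraph B' → B' = B

/-- `x` is a cut-vertex of `D`: `D − x` is disconnected. -/
def CutVertex (D : Digraph') (x : ℕ) : Prop :=
  x ∈ D.verts ∧ (D.del {x}).verts.Nonempty ∧ ¬ (D.del {x}).Connected

/-- `B` is an end-block of `D` whose unique cut-vertex (of `D`) in `B` is `x`. -/
def IsEndBlockAt (B D : Digraph') (x : ℕ) : Prop :=
  IsBlock B D ∧ x ∈ B.verts ∧ D.CutVertex x ∧ ∀ y ∈ B.verts, D.CutVertex y → y = x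

/-- `B` is a monochromatic hard end-block with cut-vertex `x`, for colour `c`. -/
def MonoHardEndBlock {s : ℕ} (F : Fin s → ℕ → ℕ × ℕ) (B : Digraph') (x : ℕ) (c : Fin s) : Prop :=
  B.inDeg x ≤ (F c x).1 ∧ B.outDeg x ≤ (F c x).2 ∧
    ∀ v ∈ B.verts, v ≠ x →
      F c v = (B.inDeg v, B.outDeg v) ∧ ∀ k : Fin s, k ≠ c → F k v = (0, 0)

/-- `B` is a bicycle hard end-block with cut-vertex `x`. -/
def BicycleHardEndBlock {s : ℕ} (F : Fin s → ℕ → ℕ × ℕ) (B : Digraph') (x : ℕ) : Prop :=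
  B.BidirectedOddCycle ∧
    ∃ i j : Fin s, i ≠ j ∧
      1 ≤ (F i x).1 ∧ 1 ≤ (F i x).2 ∧ 1 ≤ (F j x).1 ∧ 1 ≤ (F j x).2 ∧
      ∀ v ∈ B.verts, v ≠ x →
        F i v = (1, 1) ∧ F j v = (1, 1) ∧ ∀ k : Fin s, k ≠ i → k ≠ j → F k v = (0, 0)

/-- `B` is a complete hard end-block with cut-vertex `x`. -/
def CompleteHardEndBlock {s : ℕ} (F : Fin s → ℕ → ℕ × ℕ) (B : Digraph') (x : ℕ) : Prop :=
  B.BidirectedComplete ∧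
    (∀ k : Fin s, ∀ u ∈ B.verts, u ≠ x → ∀ v ∈ B.verts, v ≠ x → F k u = F k v) ∧
    (∀ k : Fin s, ∀ v ∈ B.verts, v ≠ x → (F k v).1 = (F k v).2) ∧
    (∀ k : Fin s, ∀ u ∈ B.verts, u ≠ x → (F k u).1 ≤ (F k x).1 ∧ (F k u).2 ≤ (F k x).2)

/-- `B` is a hard end-block with cut-vertex `x`. -/
def HardEndBlock {s : ℕ} (F : Fin s → ℕ → ℕ × ℕ) (B : Digraph') (x : ℕ) : Prop :=
  (∃ c : Fin s, MonoHardEndBlock F B x c) ∨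
    BicycleHardEndBlock F B x ∨ CompleteHardEndBlock F B x

/-- `(D',F')` is the contraction of `(D,F)` with respect to the hard end-block `B` with
cut-vertex `x`, where `u` is a vertex of `B` other than `x`. -/
def IsContraction (D : Digraph') {s : ℕ} (F : Fin s → ℕ → ℕ × ℕ) (B : Digraph') (x u : ℕ)
    (D' : Digraph') (F' : Fin s → ℕ → ℕ × ℕ) : Prop :=
  D' = D.del (B.verts \ {x}) ∧
  (∀ k : Fin s, ∀ v ∈ D'.verts, v ≠ x → F' k v = F k v) ∧
  ((∃ c : Fin s, MonoHardEndBlock F B x c ∧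
      F' c x = ((F c x).1 - B.inDeg x, (F c x).2 - B.outDeg x) ∧
      ∀ k : Fin s, k ≠ c → F' k x = F k x) ∨
   ((¬ ∃ c : Fin s, MonoHardEndBlock F B x c) ∧
      ∀ k : Fin s, F' k x = ((F k x).1 - (F k u).1, (F k x).2 - (F k u).2)))

/-- Property (E): all the functions exceed `1` in the relevant coordinate at every vertex
having an in-(resp. out-)neighbour. -/
def PropE (D : Digraph') {s : ℕ} (F : Fin s → ℕ → ℕ × ℕ) : Prop :=
  ∀ x ∈ D.verts, ∀ c : Fin s,
    (0 < D.inDeg x → 1 ≤ (F c x).1) ∧ (0 < D.outDeg x → 1 ≤ (F c x).2)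

/-- `C` is a directed cycle: connected, and every vertex has in- and out-degree one. -/
def IsDirectedCycle (C : Digraph') : Prop :=
  C.Connected ∧ ∀ v ∈ C.verts, C.inDeg v = 1 ∧ C.outDeg v = 1

/-- `D` is acyclic: it contains no directed cycle. -/
def AcyclicD (D : Digraph') : Prop :=
  ¬ ∃ C : Digraph', C.IsSubdigraph D ∧ C.IsDirectedCycle

/-- `α` is a `k`-dicolouring of `D`: every colour class induces an acyclic subdigraph. -/
def IsKDicolouring (D : Digraph') (k : ℕ) (α : ℕ → Fin k) : Prop :=
  ∀ i : Fin k, AcyclicD (D.induce (D.verts.filter fun v => α v = i))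

/-- The dichromatic number of `D`. -/
noncomputable def dichromatic (D : Digraph') : ℕ :=
  sInf {k : ℕ | ∃ α : ℕ → Fin k, D.IsKDicolouring k α}

end Digraph'

open Digraph'

/-- **Lemma (safe combination of colourings).** Let `(D,F)` be a pair, `X ⊆ V(D)`, `α` an
`F`-dicolouring of `D[X]`, and `(D',F')` the pair reduced from `(D,F)` by `α`. Then for every
`F'`-dicolouring `β` of `D' = D − X`, the combined colouring (`α` on `X`, `β` elsewhere) is an
`F`-dicolouring of `D`. -/
theorem reduced_dicolouring_combines
    (D : Digraph') (s : ℕ) (F : Fin s → ℕ → ℕ × ℕ)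
    (X : Finset ℕ) (hX : X ⊆ D.verts) (α β : ℕ → Fin s)
    (hα : (D.induce X).IsDicolouring s F α)
    (hβ : (D.del X).IsDicolouring s (D.reduceF F X α) β) :
    D.IsDicolouring s F (fun v => if v ∈ X then α v else β v) := by
  classical
  intro i H hH hne
  -- facts about vertices and arcs of H
  have hHv : ∀ v ∈ H.verts, v ∈ D.verts ∧ (if v ∈ X then α v else β v) = i := by
    intro v hv
    have := hH.1 hv
    simp only [Digraph'.induce, Finset.mem_inter, Finset.mem_filter] at this
    exact ⟨this.1, this.2.2⟩
  have hHa : ∀ a ∈ H.arcs, a ∈ D.arcs ∧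
      (if a.1 ∈ X then α a.1 else β a.1) = i ∧ (if a.2 ∈ X then α a.2 else β a.2) = i := by
    intro a ha
    have := hH.2 ha
    simp only [Digraph'.induce, Finset.mem_filter] at this
    exact ⟨this.1, this.2.1.2, this.2.2.2⟩
  by_cases hcase : (H.verts \ X).Nonempty
  · -- H has a vertex outside X
    set H₂ : Digraph' := H.induce (H.verts \ X) with hH₂def
    have hv2 : H₂.verts = H.verts \ X := by
      ext v
      simp only [hH₂def, Digraph'.induce, Finset.mem_inter, Finset.mem_sdiff]
      tauto
    have ha2 : ∀ a, a ∈ H₂.arcs ↔ a ∈ H.arcs ∧ a.1 ∉ X ∧ a.2 ∉ X := by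
      intro a
      simp only [hH₂def, Digraph'.induce, Finset.mem_filter, Finset.mem_sdiff]
      constructor
      · rintro ⟨ha, ⟨_, h1⟩, ⟨_, h2⟩⟩; exact ⟨ha, h1, h2⟩
      · rintro ⟨ha, h1, h2⟩
        exact ⟨ha, ⟨H.mem_fst a ha, h1⟩, ⟨H.mem_snd a ha, h2⟩⟩
    have hsub : H₂.IsSubdigraph
        ((D.del X).induce (((D.del X).verts).filter fun v => β v = i)) := by
      constructor
      · intro v hv
        rw [hv2] at hv
        obtain ⟨hvH, hvX⟩ := Finset.mem_sdiff.mp hv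
        obtain ⟨hvD, hγv⟩ := hHv v hvH
        have hβv : β v = i := by simpa [hvX] using hγv
        have hdel : v ∈ (D.del X).verts := by
          simp [Digraph'.del, Digraph'.induce, hvD, hvX]
        simp [Digraph'.induce, hdel, hβv]
      · intro a ha
        obtain ⟨haH, h1X, h2X⟩ := (ha2 a).mp ha
        obtain ⟨haD, h1γ, h2γ⟩ := hHa a haH
        have h1D := D.mem_fst a haD
        have h2D := D.mem_snd a haD
        have h1β : β a.1 = i := by simpa [h1X] using h1γ
        have h2β : β a.2 = i := by simpa [h2X] using h2γ
        simp [Digraph'.induce, Digraph'.del, haD, h1X, h2X, h1D, h2D, h1β, h2β]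
    have hne₂ : H₂.verts.Nonempty := by rw [hv2]; exact hcase
    obtain ⟨v, hvH₂, hlt⟩ := hβ i H₂ hsub hne₂
    rw [hv2] at hvH₂
    obtain ⟨hvH, hvX⟩ := Finset.mem_sdiff.mp hvH₂
    -- degree bounds
    have hin : H.inDeg v ≤ H₂.inDeg v +
        ((D.inNbrs v ∩ X).filter fun w => α w = i).card := by
      unfold Digraph'.inDeg
      have hsplit := Finset.card_filter_add_card_filter_not
        (s := H.arcs.filter fun a => a.2 = v) (p := fun a => a.1 ∈ X)
      have h1 : (((H.arcs.filter fun a => a.2 = v)).filter fun a => ¬ a.1 ∈ X).card ≤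
          (H₂.arcs.filter fun a => a.2 = v).card := by
        apply Finset.card_le_card
        intro a ha
        simp only [Finset.mem_filter] at ha ⊢
        obtain ⟨⟨haH, hav⟩, haX⟩ := ha
        exact ⟨(ha2 a).mpr ⟨haH, haX, hav ▸ hvX⟩, hav⟩
      have h2 : (((H.arcs.filter fun a => a.2 = v)).filter fun a => a.1 ∈ X).card ≤
          ((D.inNbrs v ∩ X).filter fun w => α w = i).card := by
        apply Finset.card_le_card_of_injOn Prod.fst
        · intro a ha
          simp only [Finset.mem_coe, Finset.mem_filter] at ha
          obtain ⟨⟨haH, hav⟩, haX⟩ := ha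
          obtain ⟨haD, h1γ, _⟩ := hHa a haH
          have hα1 : α a.1 = i := by simpa [haX] using h1γ
          simp only [Finset.mem_coe, Finset.mem_filter, Finset.mem_inter, Digraph'.inNbrs,
            Finset.mem_image]
          exact ⟨⟨⟨a, ⟨haD, hav⟩, rfl⟩, haX⟩, hα1⟩
        · intro a ha b hb hab
          simp only [Finset.mem_coe, Finset.mem_filter] at ha hb
          exact Prod.ext hab (ha.1.2.trans hb.1.2.symm)
      omega
    have hout : H.outDeg v ≤ H₂.outDeg v +
        ((D.outNbrs v ∩ X).filter fun w => α w = i).card := by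
      unfold Digraph'.outDeg
      have hsplit := Finset.card_filter_add_card_filter_not
        (s := H.arcs.filter fun a => a.1 = v) (p := fun a => a.2 ∈ X)
      have h1 : (((H.arcs.filter fun a => a.1 = v)).filter fun a => ¬ a.2 ∈ X).card ≤
          (H₂.arcs.filter fun a => a.1 = v).card := by
        apply Finset.card_le_card
        intro a ha
        simp only [Finset.mem_filter] at ha ⊢
        obtain ⟨⟨haH, hav⟩, haX⟩ := ha
        exact ⟨(ha2 a).mpr ⟨haH, hav ▸ hvX, haX⟩, hav⟩
      have h2 : (((H.arcs.filter fun a => a.1 = v)).filter fun a => a.2 ∈ X).card ≤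
          ((D.outNbrs v ∩ X).filter fun w => α w = i).card := by
        apply Finset.card_le_card_of_injOn Prod.snd
        · intro a ha
          simp only [Finset.mem_coe, Finset.mem_filter] at ha
          obtain ⟨⟨haH, hav⟩, haX⟩ := ha
          obtain ⟨haD, _, h2γ⟩ := hHa a haH
          have hα2 : α a.2 = i := by simpa [haX] using h2γ
          simp only [Finset.mem_coe, Finset.mem_filter, Finset.mem_inter, Digraph'.outNbrs,
            Finset.mem_image]
          exact ⟨⟨⟨a, ⟨haD, hav⟩, rfl⟩, haX⟩, hα2⟩
        · intro a ha b hb hab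
          simp only [Finset.mem_coe, Finset.mem_filter] at ha hb
          exact Prod.ext (ha.1.2.trans hb.1.2.symm) hab
      omega
    refine ⟨v, hvH, ?_⟩
    simp only [Digraph'.reduceF] at hlt
    rcases hlt with h | h
    · left; omega
    · right; omega
  · -- H.verts ⊆ X
    have hsubX : H.verts ⊆ X := by
      intro v hv
      by_contra h
      exact hcase ⟨v, Finset.mem_sdiff.mpr ⟨hv, h⟩⟩
    have hsub : H.IsSubdigraph
        ((D.induce X).induce (((D.induce X).verts).filter fun v => α v = i)) := by
      constructor
      · intro v hv
        obtain ⟨hvD, hγv⟩ := hHv v hv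
        have hvX := hsubX hv
        have hαv : α v = i := by simpa [hvX] using hγv
        simp [Digraph'.induce, hvD, hvX, hαv]
      · intro a ha
        obtain ⟨haD, h1γ, h2γ⟩ := hHa a ha
        have h1X := hsubX (H.mem_fst a ha)
        have h2X := hsubX (H.mem_snd a ha)
        have h1D := D.mem_fst a haD
        have h2D := D.mem_snd a haD
        have h1α : α a.1 = i := by simpa [h1X] using h1γ
        have h2α : α a.2 = i := by simpa [h2X] using h2γ
        simp [Digraph'.induce, haD, h1X, h2X, h1D, h2D, h1α, h2α]
    exact hα i H hsub hne
end

section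
/- Let (D,F) be a valid pair that is loose, i.e. valid but not tight. Then D is F-dicolourable. -/
open scoped Classical

open Digraph'

namespace LooseAux

lemma inDeg_eq_card (D : Digraph') (v : ℕ) : D.inDeg v = (D.inNbrs v).card := by
  unfold Digraph'.inDeg Digraph'.inNbrs
  rw [Finset.card_image_of_injOn]
  intro a ha b hb hab
  simp only [Finset.mem_filter, Finset.mem_coe] at ha hb
  exact Prod.ext hab (ha.2.trans hb.2.symm)

lemma outDeg_eq_card (D : Digraph') (v : ℕ) : D.outDeg v = (D.outNbrs v).card := by
  unfold Digraph'.outDeg Digraph'.outNbrs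
  rw [Finset.card_image_of_injOn]
  intro a ha b hb hab
  simp only [Finset.mem_filter, Finset.mem_coe] at ha hb
  exact Prod.ext (ha.2.trans hb.2.symm) hab

lemma mem_inNbrs (D : Digraph') {w v : ℕ} (h : (w, v) ∈ D.arcs) : w ∈ D.inNbrs v := by
  unfold Digraph'.inNbrs
  exact Finset.mem_image.mpr ⟨(w, v), Finset.mem_filter.mpr ⟨h, rfl⟩, rfl⟩

lemma mem_outNbrs (D : Digraph') {v w : ℕ} (h : (v, w) ∈ D.arcs) : w ∈ D.outNbrs v := by
  unfold Digraph'.outNbrs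
  exact Finset.mem_image.mpr ⟨(v, w), Finset.mem_filter.mpr ⟨h, rfl⟩, rfl⟩

lemma adj_mem_ugNbrs (D : Digraph') {v w : ℕ} (h : D.ugAdj v w) : w ∈ D.ugNbrs v := by
  rcases h.2.2 with h' | h'
  · exact Finset.mem_union.mpr (Or.inr (mem_outNbrs D h'))
  · exact Finset.mem_union.mpr (Or.inl (mem_inNbrs D h'))

lemma exists_frontier (D : Digraph') (hconn : D.Connected) (S : Finset ℕ)
    (t : ℕ) (ht : t ∈ D.verts) (hts : t ∉ S)
    (w₀ : ℕ) (hw₀S : w₀ ∈ S) (hw₀v : w₀ ∈ D.verts) :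
    ∃ v, v ∉ S ∧ ∃ w ∈ S, D.ugAdj v w := by
  have hwalk : Relation.ReflTransGen D.ugAdj t w₀ := hconn.2 t ht w₀ hw₀v
  clear ht
  induction hwalk using Relation.ReflTransGen.head_induction_on with
  | refl => exact absurd hw₀S hts
  | @head x c h' _ ih =>
    by_cases hc : c ∈ S
    · exact ⟨x, hts, c, hc, h'⟩
    · exact ih hc

/-- a list in which every vertex except the first has an earlier neighbour. -/
def chain (D : Digraph') (R : List ℕ) : Prop :=
  ∀ i, (hi : i < R.length) → 0 < i →
    ∃ j, ∃ hj : j < R.length, j < i ∧ D.ugAdj (R[i]'hi) (R[j]'hj)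

lemma buildR (D : Digraph') (hconn : D.Connected) :
    ∀ (m : ℕ) (R : List ℕ), R ≠ [] → R.Nodup → R.toFinset ⊆ D.verts → chain D R →
      D.verts.card - R.length = m →
      ∃ R', R'.Nodup ∧ R'.toFinset = D.verts ∧ chain D R' ∧ R <+: R' := by
  intro m
  induction m with
  | zero =>
    intro R _ hnd hsub hch hcard
    have hlen : R.toFinset.card = R.length := List.toFinset_card_of_nodup hnd
    have hle : D.verts.card ≤ R.toFinset.card := by omega
    exact ⟨R, hnd, Finset.eq_of_subset_of_card_le hsub hle, hch, List.prefix_rfl⟩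
  | succ m ih =>
    intro R hne hnd hsub hch hcard
    have hlen : R.toFinset.card = R.length := List.toFinset_card_of_nodup hnd
    have hssub : R.toFinset ⊂ D.verts := by
      refine Finset.ssubset_iff_subset_ne.mpr ⟨hsub, ?_⟩
      intro h
      rw [h] at hlen
      omega
    obtain ⟨t, htv, hts⟩ := Finset.exists_of_ssubset hssub
    have hw₀ : R.head hne ∈ R.toFinset := List.mem_toFinset.mpr (List.head_mem hne)
    obtain ⟨v, hvS, w, hwS, hadj⟩ :=
      exists_frontier D hconn R.toFinset t htv hts (R.head hne) hw₀ (hsub hw₀)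
    have hvR : v ∉ R := fun h => hvS (List.mem_toFinset.mpr h)
    have hnd' : (R ++ [v]).Nodup := by
      rw [List.nodup_append]
      refine ⟨hnd, List.nodup_singleton v, ?_⟩
      intro a haR b hav
      simp only [List.mem_singleton] at hav
      subst hav
      exact fun h => hvR (h ▸ haR)
    have hsub' : (R ++ [v]).toFinset ⊆ D.verts := by
      intro a ha
      simp only [List.toFinset_append, Finset.mem_union, List.mem_toFinset,
        List.mem_singleton] at ha
      rcases ha with h | h
      · exact hsub (List.mem_toFinset.mpr h)
      · subst h
        exact hadj.1
    have hch' : chain D (R ++ [v]) := by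
      intro i hi hpos
      rcases lt_or_ge i R.length with h | h
      · obtain ⟨j, hj, hji, hAdj⟩ := hch i h hpos
        refine ⟨j, by simp only [List.length_append, List.length_singleton]; omega, hji, ?_⟩
        rw [List.getElem_append_left h, List.getElem_append_left hj]
        exact hAdj
      · have hil : i = R.length := by
          simp only [List.length_append, List.length_singleton] at hi
          omega
        subst hil
        obtain ⟨⟨j, hj⟩, hgj⟩ := List.mem_iff_get.mp (List.mem_toFinset.mp hwS)
        refine ⟨j, by simp only [List.length_append, List.length_singleton]; omega, hj, ?_⟩
        rw [List.getElem_concat_length (l := R) (a := v) (i := R.length) rfl, List.getElem_append_left hj]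
        rw [List.get_eq_getElem] at hgj
        rw [hgj]
        exact hadj
    have hcard' : D.verts.card - (R ++ [v]).length = m := by
      simp only [List.length_append, List.length_singleton]
      have : R.length < D.verts.card := by omega
      omega
    obtain ⟨R', h1, h2, h3, h4⟩ := ih (R ++ [v]) (by simp) hnd' hsub' hch' hcard'
    exact ⟨R', h1, h2, h3, (List.prefix_append R [v]).trans h4⟩

/-- vertex coloured at time `k` (position `R.length - 1 - k`). -/
def vtx (R : List ℕ) (k : ℕ) : ℕ := R.getD (R.length - 1 - k) 0

/-- set of vertices coloured before time `k`: positions `≥ R.length - k`. -/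
def Xset (R : List ℕ) (k : ℕ) : Finset ℕ := (R.drop (R.length - k)).toFinset

noncomputable def pickCol (D : Digraph') (s : ℕ) (F : Fin s → ℕ → ℕ × ℕ) (hs : 0 < s)
    (g : ℕ → Fin s) (X : Finset ℕ) (v : ℕ) : Fin s :=
  if h : ∃ c : Fin s,
      ((D.inNbrs v ∩ X).filter fun w => g w = c).card < (F c v).1 ∨
      ((D.outNbrs v ∩ X).filter fun w => g w = c).card < (F c v).2
  then h.choose else ⟨0, hs⟩

noncomputable def col (D : Digraph') (s : ℕ) (F : Fin s → ℕ → ℕ × ℕ) (hs : 0 < s)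
    (R : List ℕ) : ℕ → ℕ → Fin s
  | 0 => fun _ => ⟨0, hs⟩
  | (k+1) => fun x =>
      if x = vtx R k then
        pickCol D s F hs (col D s F hs R k) (Xset R k) (vtx R k)
      else col D s F hs R k x

lemma Xset_mono (R : List ℕ) {k m : ℕ} (h : k ≤ m) : Xset R k ⊆ Xset R m := by
  intro x hx
  simp only [Xset, List.mem_toFinset] at *
  have heq : R.drop (R.length - k) =
      (R.drop (R.length - m)).drop ((R.length - k) - (R.length - m)) := by
    rw [List.drop_drop]
    congr 1
    omega
  rw [heq] at hx
  exact List.drop_subset _ _ hx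

lemma mem_Xset_iff (R : List ℕ) (hnd : R.Nodup) {k : ℕ} (x : ℕ) :
    x ∈ Xset R k ↔ ∃ q, ∃ hq : q < R.length, R.length - k ≤ q ∧ R[q]'hq = x := by
  constructor
  · intro hx
    simp only [Xset, List.mem_toFinset] at hx
    obtain ⟨⟨j, hj⟩, hgj⟩ := List.mem_iff_get.mp hx
    rw [List.get_eq_getElem] at hgj
    have hj' : j < R.length - (R.length - k) := by
      simpa only [List.length_drop] using hj
    have hql : (R.length - k) + j < R.length := by omega
    refine ⟨(R.length - k) + j, hql, by omega, ?_⟩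
    rw [List.getElem_drop' hql] at *
    exact hgj
  · rintro ⟨q, hq, hqk, rfl⟩
    simp only [Xset, List.mem_toFinset]
    obtain ⟨d, hd⟩ : ∃ d, q = (R.length - k) + d := ⟨q - (R.length - k), by omega⟩
    subst hd
    rw [List.getElem_drop' hq]
    exact List.getElem_mem _

lemma vtx_eq_getElem (R : List ℕ) {k : ℕ} (hk : k < R.length) :
    vtx R k = R[R.length - 1 - k]'(by omega) := by
  unfold vtx
  exact List.getD_eq_getElem R 0 (by omega)

lemma vtx_not_mem_Xset (R : List ℕ) (hnd : R.Nodup) {k : ℕ} (hk : k < R.length) :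
    vtx R k ∉ Xset R k := by
  intro hmem
  rw [mem_Xset_iff R hnd] at hmem
  obtain ⟨q, hq, hqk, hgq⟩ := hmem
  rw [vtx_eq_getElem R hk] at hgq
  have := (List.Nodup.getElem_inj_iff hnd).mp hgq
  omega

lemma vtx_mem_Xset_succ (R : List ℕ) (hnd : R.Nodup) {k : ℕ} (hk : k < R.length) :
    vtx R k ∈ Xset R (k+1) := by
  rw [mem_Xset_iff R hnd, vtx_eq_getElem R hk]
  exact ⟨R.length - 1 - k, by omega, by omega, rfl⟩

lemma col_stable (D : Digraph') (s : ℕ) (F : Fin s → ℕ → ℕ × ℕ) (hs : 0 < s)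
    (R : List ℕ) (hnd : R.Nodup) :
    ∀ m, m ≤ R.length → ∀ k, k ≤ m → ∀ x ∈ Xset R k,
      col D s F hs R m x = col D s F hs R k x := by
  intro m
  induction m with
  | zero =>
    intro _ k hk x _
    have : k = 0 := by omega
    subst this
    rfl
  | succ m ihm =>
    intro hm k hk x hx
    rcases Nat.eq_or_lt_of_le hk with he | hlt
    · subst he; rfl
    · have hk' : k ≤ m := by omega
      have hxm : x ∈ Xset R m := Xset_mono R hk' hx
      have hxne : x ≠ vtx R m := by
        intro h
        subst h
        exact vtx_not_mem_Xset R hnd (by omega : m < R.length) hxm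
      show (if x = vtx R m then _ else col D s F hs R m x) = _
      rw [if_neg hxne]
      exact ihm (by omega) k hk' x hx

lemma exists_goodCol (D : Digraph') (s : ℕ) (F : Fin s → ℕ → ℕ × ℕ)
    (hvalid : ∀ v ∈ D.verts, D.inDeg v ≤ ∑ i, (F i v).1 ∧ D.outDeg v ≤ ∑ i, (F i v).2)
    (u : ℕ) (hslack : D.inDeg u < ∑ i, (F i u).1 ∨ D.outDeg u < ∑ i, (F i u).2)
    (R : List ℕ) (hnd : R.Nodup) (hRV : R.toFinset = D.verts) (hch : chain D R)
    (hR0 : ∀ h : 0 < R.length, R[0]'h = u)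
    (g : ℕ → Fin s) {k : ℕ} (hk : k < R.length) :
    ∃ c : Fin s,
      ((D.inNbrs (vtx R k) ∩ Xset R k).filter fun w => g w = c).card < (F c (vtx R k)).1 ∨
      ((D.outNbrs (vtx R k) ∩ Xset R k).filter fun w => g w = c).card < (F c (vtx R k)).2 := by
  by_contra hcon
  push_neg at hcon
  have hp : R.length - 1 - k < R.length := by omega
  have hvget : vtx R k = R[R.length - 1 - k]'hp := vtx_eq_getElem R hk
  set v := vtx R k with hv
  have hvmem : v ∈ D.verts := by
    rw [← hRV]
    exact List.mem_toFinset.mpr (hvget ▸ List.getElem_mem hp)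
  have hvalidv := hvalid v hvmem
  -- in side
  have hinsum : (D.inNbrs v ∩ Xset R k).card =
      ∑ c : Fin s, ((D.inNbrs v ∩ Xset R k).filter fun w => g w = c).card :=
    Finset.card_eq_sum_card_fiberwise (fun x _ => Finset.mem_univ _)
  have hin1 : ∑ i, (F i v).1 ≤ (D.inNbrs v ∩ Xset R k).card := by
    rw [hinsum]
    exact Finset.sum_le_sum fun c _ => (hcon c).1
  have hin2 : (D.inNbrs v ∩ Xset R k).card ≤ (D.inNbrs v).card :=
    Finset.card_le_card Finset.inter_subset_left
  have hindeg : D.inDeg v = (D.inNbrs v).card := inDeg_eq_card D v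
  have hineq : ∑ i, (F i v).1 = D.inDeg v := by omega
  have hinsub : D.inNbrs v ⊆ Xset R k := by
    have hcard : (D.inNbrs v).card ≤ (D.inNbrs v ∩ Xset R k).card := by omega
    have := Finset.eq_of_subset_of_card_le
      Finset.inter_subset_left hcard
    rw [← this]
    exact Finset.inter_subset_right
  -- out side
  have houtsum : (D.outNbrs v ∩ Xset R k).card =
      ∑ c : Fin s, ((D.outNbrs v ∩ Xset R k).filter fun w => g w = c).card :=
    Finset.card_eq_sum_card_fiberwise (fun x _ => Finset.mem_univ _)
  have hout1 : ∑ i, (F i v).2 ≤ (D.outNbrs v ∩ Xset R k).card := by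
    rw [houtsum]
    exact Finset.sum_le_sum fun c _ => (hcon c).2
  have hout2 : (D.outNbrs v ∩ Xset R k).card ≤ (D.outNbrs v).card :=
    Finset.card_le_card Finset.inter_subset_left
  have houtdeg : D.outDeg v = (D.outNbrs v).card := outDeg_eq_card D v
  have houteq : ∑ i, (F i v).2 = D.outDeg v := by omega
  have houtsub : D.outNbrs v ⊆ Xset R k := by
    have hcard : (D.outNbrs v).card ≤ (D.outNbrs v ∩ Xset R k).card := by omega
    have := Finset.eq_of_subset_of_card_le
      Finset.inter_subset_left hcard
    rw [← this]
    exact Finset.inter_subset_right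
  -- case split on whether v = u (time n-1) or has an earlier neighbour
  rcases Nat.eq_or_lt_of_le (Nat.le_of_lt_succ (by omega : k < R.length - 1 + 1))
    with hke | hklt
  · -- k = R.length - 1, so v = u, contradicting slack
    have h0 : R.length - 1 - k = 0 := by omega
    have hvu : v = u := by
      rw [hvget]
      simp only [h0]
      exact hR0 (by omega)
    rw [hvu] at hineq houteq
    omega
  · -- k < R.length - 1, v has a neighbour at an earlier position (later time)
    obtain ⟨j, hj, hji, hadj⟩ := hch (R.length - 1 - k) hp (by omega)
    have hwmem : R[j]'hj ∈ D.ugNbrs v := adj_mem_ugNbrs D (by rw [hvget]; exact hadj)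
    have hwX : R[j]'hj ∈ Xset R k := by
      rcases Finset.mem_union.mp hwmem with h | h
      · exact hinsub h
      · exact houtsub h
    rw [mem_Xset_iff R hnd] at hwX
    obtain ⟨q, hq, hqk, hgq⟩ := hwX
    have := (List.Nodup.getElem_inj_iff hnd).mp hgq
    omega

lemma col_spec (D : Digraph') (s : ℕ) (F : Fin s → ℕ → ℕ × ℕ) (hs : 0 < s)
    (hvalid : ∀ v ∈ D.verts, D.inDeg v ≤ ∑ i, (F i v).1 ∧ D.outDeg v ≤ ∑ i, (F i v).2)
    (u : ℕ) (hslack : D.inDeg u < ∑ i, (F i u).1 ∨ D.outDeg u < ∑ i, (F i u).2)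
    (R : List ℕ) (hnd : R.Nodup) (hRV : R.toFinset = D.verts) (hch : chain D R)
    (hR0 : ∀ h : 0 < R.length, R[0]'h = u) {k : ℕ} (hk : k < R.length) :
    ∃ c : Fin s, col D s F hs R (k+1) (vtx R k) = c ∧
      (((D.inNbrs (vtx R k) ∩ Xset R k).filter
          fun w => col D s F hs R k w = c).card < (F c (vtx R k)).1 ∨
       ((D.outNbrs (vtx R k) ∩ Xset R k).filter
          fun w => col D s F hs R k w = c).card < (F c (vtx R k)).2) := by
  have hex := exists_goodCol D s F hvalid u hslack R hnd hRV hch hR0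
    (col D s F hs R k) hk
  refine ⟨hex.choose, ?_, hex.choose_spec⟩
  show (if vtx R k = vtx R k then
      pickCol D s F hs (col D s F hs R k) (Xset R k) (vtx R k)
    else col D s F hs R k (vtx R k)) = hex.choose
  rw [if_pos rfl]
  unfold pickCol
  rw [dif_pos hex]

end LooseAux

open LooseAux in
/-- **Lemma (loose instances).** Let `(D,F)` be a valid pair that is loose
(valid but not tight). Then `D` is `F`-dicolourable. -/
theorem loose_pair_dicolourable
    (D : Digraph') (s : ℕ) (F : Fin s → ℕ → ℕ × ℕ)
    (hvalid : D.ValidPair s F) (hloose : ¬ D.Tight s F) :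
    D.Dicolourable s F := by
  classical
  obtain ⟨hconn, hdeg⟩ := hvalid
  -- a slack vertex u
  have hex : ∃ u ∈ D.verts,
      D.inDeg u < ∑ i, (F i u).1 ∨ D.outDeg u < ∑ i, (F i u).2 := by
    by_contra h
    push_neg at h
    apply hloose
    intro v hv
    have h1 := hdeg v hv
    have h2 := h v hv
    omega
  obtain ⟨u, huv, hslack⟩ := hex
  have hs : 0 < s := by
    by_contra h
    have hs0 : s = 0 := by omega
    subst hs0
    have h1 : (∑ i : Fin 0, (F i u).1) = 0 := rfl
    have h2 : (∑ i : Fin 0, (F i u).2) = 0 := rfl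
    omega
  -- build the ordering list R
  have hch0 : chain D [u] := by
    intro i hi hpos
    simp only [List.length_singleton] at hi
    omega
  obtain ⟨R, hnd, hRV, hch, hpre⟩ := buildR D hconn (D.verts.card - [u].length) [u]
    (by simp) (by simp) (by simpa using huv) hch0 rfl
  have hR0 : ∀ h : 0 < R.length, R[0]'h = u := by
    intro h
    obtain ⟨t, ht⟩ := hpre
    subst ht
    rfl
  set n := R.length with hn
  set α : ℕ → Fin s := col D s F hs R n with hα
  refine ⟨α, ?_⟩
  intro i H hHsub hHne
  set Vi := D.verts.filter (fun v => α v = i) with hVi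
  have hclass : ∀ x ∈ H.verts, x ∈ D.verts ∧ α x = i := by
    intro x hx
    have hx' := hHsub.1 hx
    simp only [Digraph'.induce, Finset.mem_inter, hVi, Finset.mem_filter] at hx'
    exact ⟨hx'.1, hx'.2.2⟩
  obtain ⟨v, hvH, hvmin⟩ := Finset.exists_min_image H.verts (fun x => R.idxOf x) hHne
  have hvV : v ∈ D.verts := (hclass v hvH).1
  have hvR : v ∈ R := by
    rw [← List.mem_toFinset, hRV]
    exact hvV
  have hpn : R.idxOf v < n := List.idxOf_lt_length_iff.mpr hvR
  set p := R.idxOf v with hpdef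
  set k := n - 1 - p with hkdef
  have hkn : k < n := by omega
  have hpk : n - 1 - k = p := by omega
  have hvtx : vtx R k = v := by
    rw [vtx_eq_getElem R hkn]
    simp only [← hn, hpk]
    exact List.getElem_idxOf hpn
  -- α agrees with col (k+1) on Xset (k+1), and v ∈ Xset (k+1)
  have hvX : v ∈ Xset R (k+1) := hvtx ▸ vtx_mem_Xset_succ R hnd hkn
  have hαv : α v = col D s F hs R (k+1) v := by
    rw [hα]
    exact col_stable D s F hs R hnd n le_rfl (k+1) (by omega) v hvX
  obtain ⟨c, hceq, hcspec⟩ := col_spec D s F hs hdeg u hslack R hnd hRV hch hR0 hkn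
  rw [hvtx] at hceq hcspec
  have hci : c = i := by
    rw [← hceq, ← hαv]
    exact (hclass v hvH).2
  subst hci
  -- every vertex of H other than v lies in Xset k and has colour c under col k
  have hkey : ∀ w ∈ H.verts, w ≠ v → w ∈ Xset R k ∧ col D s F hs R k w = c := by
    intro w hwH hwv
    have hwV : w ∈ D.verts := (hclass w hwH).1
    have hwR : w ∈ R := by
      rw [← List.mem_toFinset, hRV]
      exact hwV
    have hqn : R.idxOf w < n := List.idxOf_lt_length_iff.mpr hwR
    have hpq : p ≤ R.idxOf w := hvmin w hwH
    have hqp : R.idxOf w ≠ p := by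
      intro h
      apply hwv
      have h1 : R[R.idxOf w]'hqn = w := List.getElem_idxOf hqn
      have h2 : R[p]'hpn = v := List.getElem_idxOf hpn
      rw [← h1, ← h2]
      congr 1
    have hwX : w ∈ Xset R k := by
      rw [mem_Xset_iff R hnd]
      exact ⟨R.idxOf w, hqn, by omega, List.getElem_idxOf hqn⟩
    refine ⟨hwX, ?_⟩
    have := col_stable D s F hs R hnd n le_rfl k (by omega) w hwX
    rw [← this]
    exact (hclass w hwH).2
  refine ⟨v, hvH, ?_⟩
  rcases hcspec with hlt | hlt
  · -- in-degree case
    refine Or.inl (lt_of_le_of_lt ?_ hlt)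
    unfold Digraph'.inDeg
    apply Finset.card_le_card_of_injOn Prod.fst
    · intro a ha
      simp only [Finset.mem_coe, Finset.mem_filter] at ha ⊢
      obtain ⟨haH, hav⟩ := ha
      have haD' := hHsub.2 haH
      simp only [Digraph'.induce, Finset.mem_filter] at haD'
      have haD : a ∈ D.arcs := haD'.1
      have ha1H : a.1 ∈ H.verts := H.mem_fst a haH
      have ha1v : a.1 ≠ v := by
        have := D.no_loops a haD
        rw [hav] at this
        exact this
      obtain ⟨hX, hcol⟩ := hkey a.1 ha1H ha1v
      refine ⟨Finset.mem_inter.mpr ⟨?_, hX⟩, hcol⟩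
      apply mem_inNbrs D
      have : (a.1, a.2) ∈ D.arcs := haD
      rwa [hav] at this
    · intro a ha b hb hab
      simp only [Finset.coe_filter, Set.mem_setOf_eq] at ha hb
      exact Prod.ext hab (ha.2.trans hb.2.symm)
  · -- out-degree case
    refine Or.inr (lt_of_le_of_lt ?_ hlt)
    unfold Digraph'.outDeg
    apply Finset.card_le_card_of_injOn Prod.snd
    · intro a ha
      simp only [Finset.mem_coe, Finset.mem_filter] at ha ⊢
      obtain ⟨haH, hav⟩ := ha
      have haD' := hHsub.2 haH
      simp only [Digraph'.induce, Finset.mem_filter] at haD'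
      have haD : a ∈ D.arcs := haD'.1
      have ha2H : a.2 ∈ H.verts := H.mem_snd a haH
      have ha2v : a.2 ≠ v := by
        have := D.no_loops a haD
        rw [hav] at this
        exact fun h => this (h ▸ rfl)
      obtain ⟨hX, hcol⟩ := hkey a.2 ha2H ha2v
      refine ⟨Finset.mem_inter.mpr ⟨?_, hX⟩, hcol⟩
      apply mem_outNbrs D
      have : (a.1, a.2) ∈ D.arcs := haD
      rwa [hav] at this
    · intro a ha b hb hab
      simp only [Finset.coe_filter, Set.mem_setOf_eq] at ha hb
      exact Prod.ext (ha.2.trans hb.2.symm) hab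
end

section
/- Let (D,F) be a tight valid pair with F = (f₁,…,f_s) such that D is not biconnected, let B be a hard end-block of D with cut-vertex x, and let (D',F') be the contraction of (D,F) with respect to B. Then (D,F) is a hard pair if and only if (D',F') is a hard pair. -/
open scoped Classical

namespace Digraph'

lemma ext' : ∀ {D E : Digraph'}, D.verts = E.verts → D.arcs = E.arcs → D = E
  | ⟨_, _, _, _, _⟩, ⟨_, _, _, _, _⟩, rfl, rfl => rfl

variable {D H B D₁ D₂ : Digraph'}

@[simp] lemma mem_inNbrs {w v : ℕ} : w ∈ D.inNbrs v ↔ (w, v) ∈ D.arcs := by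
  constructor
  · intro h
    simp only [inNbrs, Finset.mem_image, Finset.mem_filter] at h
    obtain ⟨a, ⟨ha, h2⟩, h1⟩ := h
    have : a = (w, v) := by cases a; simp_all
    rwa [this] at ha
  · intro h
    simp only [inNbrs, Finset.mem_image, Finset.mem_filter]
    exact ⟨(w, v), ⟨h, rfl⟩, rfl⟩

@[simp] lemma mem_outNbrs {w v : ℕ} : w ∈ D.outNbrs v ↔ (v, w) ∈ D.arcs := by
  constructor
  · intro h
    simp only [outNbrs, Finset.mem_image, Finset.mem_filter] at h
    obtain ⟨a, ⟨ha, h2⟩, h1⟩ := h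
    have : a = (v, w) := by cases a; simp_all
    rwa [this] at ha
  · intro h
    simp only [outNbrs, Finset.mem_image, Finset.mem_filter]
    exact ⟨(v, w), ⟨h, rfl⟩, rfl⟩

@[simp] lemma mem_ugNbrs {w v : ℕ} :
    w ∈ D.ugNbrs v ↔ (w, v) ∈ D.arcs ∨ (v, w) ∈ D.arcs := by
  simp [ugNbrs]

lemma ugNbrs_comm {w v : ℕ} : w ∈ D.ugNbrs v ↔ v ∈ D.ugNbrs w := by
  simp [or_comm]

lemma not_mem_ugNbrs_self {v : ℕ} : v ∉ D.ugNbrs v := by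
  simp only [mem_ugNbrs]
  rintro (h | h) <;> exact D.no_loops _ h rfl

lemma ugNbrs_subset_verts {v : ℕ} : D.ugNbrs v ⊆ D.verts := by
  intro w hw
  rw [mem_ugNbrs] at hw
  rcases hw with h | h
  · exact D.mem_fst _ h
  · exact D.mem_snd _ h

lemma ugAdj_symm {u v : ℕ} (h : D.ugAdj u v) : D.ugAdj v u :=
  ⟨h.2.1, h.1, h.2.2.symm⟩

lemma ugAdj_iff {u v : ℕ} : D.ugAdj u v ↔ u ∈ D.verts ∧ v ∈ D.verts ∧ v ∈ D.ugNbrs u := by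
  simp [ugAdj, mem_ugNbrs, or_comm]

lemma rtg_symm {u v : ℕ} (h : Relation.ReflTransGen D.ugAdj u v) :
    Relation.ReflTransGen D.ugAdj v u := by
  induction h with
  | refl => exact .refl
  | tail _ h ih => exact Relation.ReflTransGen.trans (.single (ugAdj_symm h)) ih

lemma rtg_mono (hv : H.verts ⊆ D.verts) (ha : H.arcs ⊆ D.arcs) {u v : ℕ}
    (h : Relation.ReflTransGen H.ugAdj u v) : Relation.ReflTransGen D.ugAdj u v := by
  induction h with
  | refl => exact .refl
  | tail _ h ih =>
      exact ih.tail ⟨hv h.1, hv h.2.1, h.2.2.imp (fun t => ha t) (fun t => ha t)⟩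

lemma connected_of_hub {x : ℕ} (hx : x ∈ D.verts)
    (h : ∀ v ∈ D.verts, Relation.ReflTransGen D.ugAdj v x) : D.Connected := by
  refine ⟨⟨x, hx⟩, fun u hu v hv => (h u hu).trans (rtg_symm (h v hv))⟩

@[simp] lemma induce_verts {X : Finset ℕ} : (D.induce X).verts = D.verts ∩ X := rfl

@[simp] lemma mem_induce_arcs {X : Finset ℕ} {a : ℕ × ℕ} :
    a ∈ (D.induce X).arcs ↔ a ∈ D.arcs ∧ a.1 ∈ X ∧ a.2 ∈ X := by
  simp [induce]

@[simp] lemma del_verts {X : Finset ℕ} : (D.del X).verts = D.verts \ X := by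
  simp only [del, induce_verts]
  exact Finset.inter_eq_right.mpr (Finset.sdiff_subset)

@[simp] lemma mem_del_arcs {X : Finset ℕ} {a : ℕ × ℕ} :
    a ∈ (D.del X).arcs ↔ a ∈ D.arcs ∧ a.1 ∉ X ∧ a.2 ∉ X := by
  simp only [del, mem_induce_arcs, Finset.mem_sdiff]
  constructor
  · rintro ⟨h, ⟨_, h1⟩, ⟨_, h2⟩⟩; exact ⟨h, h1, h2⟩
  · rintro ⟨h, h1, h2⟩; exact ⟨h, ⟨D.mem_fst _ h, h1⟩, ⟨D.mem_snd _ h, h2⟩⟩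

/-- in-degree equals the number of in-neighbours. -/
lemma inDeg_eq_card_inNbrs (D : Digraph') (v : ℕ) : D.inDeg v = (D.inNbrs v).card := by
  unfold inDeg inNbrs
  rw [Finset.card_image_of_injOn]
  intro a ha b hb hab
  simp only [Finset.mem_coe, Finset.mem_filter] at ha hb
  exact Prod.ext hab (ha.2.trans hb.2.symm)

lemma outDeg_eq_card_outNbrs (D : Digraph') (v : ℕ) : D.outDeg v = (D.outNbrs v).card := by
  unfold outDeg outNbrs
  rw [Finset.card_image_of_injOn]
  intro a ha b hb hab
  simp only [Finset.mem_coe, Finset.mem_filter] at ha hb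
  exact Prod.ext (ha.2.trans hb.2.symm) hab

lemma inDeg_mono (h : H.arcs ⊆ D.arcs) (v : ℕ) : H.inDeg v ≤ D.inDeg v := by
  unfold inDeg
  exact Finset.card_le_card (fun a ha => by
    simp only [Finset.mem_filter] at ha ⊢; exact ⟨h ha.1, ha.2⟩)

lemma outDeg_mono (h : H.arcs ⊆ D.arcs) (v : ℕ) : H.outDeg v ≤ D.outDeg v := by
  unfold outDeg
  exact Finset.card_le_card (fun a ha => by
    simp only [Finset.mem_filter] at ha ⊢; exact ⟨h ha.1, ha.2⟩)

end Digraph'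
namespace Digraph'

variable {D H A B D₁ D₂ : Digraph'}

lemma exists_nbr_of_connected (hc : D.Connected) {x : ℕ} (hx : x ∈ D.verts)
    (h2 : 2 ≤ D.verts.card) : ∃ w, w ∈ D.ugNbrs x := by
  obtain ⟨w, hw, hwx⟩ := Finset.exists_mem_ne (show 1 < D.verts.card by omega) x
  have h := hc.2 x hx w hw
  rcases h.cases_head with rfl | ⟨c, hc', _⟩
  · exact absurd rfl hwx
  · exact ⟨c, by rw [mem_ugNbrs]; exact hc'.2.2.symm.imp id id⟩

/-- The intersection of two digraphs. -/
def inter (A C : Digraph') : Digraph' where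
  verts := A.verts ∩ C.verts
  arcs := A.arcs ∩ C.arcs
  mem_fst := fun a ha => by
    rw [Finset.mem_inter] at ha ⊢
    exact ⟨A.mem_fst a ha.1, C.mem_fst a ha.2⟩
  mem_snd := fun a ha => by
    rw [Finset.mem_inter] at ha ⊢
    exact ⟨A.mem_snd a ha.1, C.mem_snd a ha.2⟩
  no_loops := fun a ha => A.no_loops a (Finset.mem_inter.mp ha).1

@[simp] lemma inter_verts {C : Digraph'} : (inter A C).verts = A.verts ∩ C.verts := rfl
@[simp] lemma inter_arcs {C : Digraph'} : (inter A C).arcs = A.arcs ∩ C.arcs := rfl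

/-- A decomposition of `D` into `D₁` and `D₂` overlapping exactly at `x`. -/
structure Decomp (D D₁ D₂ : Digraph') (x : ℕ) : Prop where
  hx : D₁.verts ∩ D₂.verts = {x}
  hV : D.verts = D₁.verts ∪ D₂.verts
  hA : D.arcs = D₁.arcs ∪ D₂.arcs

namespace Decomp

variable {x : ℕ}

lemma x_mem₁ (h : Decomp D D₁ D₂ x) : x ∈ D₁.verts := by
  have : x ∈ D₁.verts ∩ D₂.verts := by rw [h.hx]; exact Finset.mem_singleton_self x
  exact (Finset.mem_inter.mp this).1

lemma x_mem₂ (h : Decomp D D₁ D₂ x) : x ∈ D₂.verts := by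
  have : x ∈ D₁.verts ∩ D₂.verts := by rw [h.hx]; exact Finset.mem_singleton_self x
  exact (Finset.mem_inter.mp this).2

lemma symm (h : Decomp D D₁ D₂ x) : Decomp D D₂ D₁ x :=
  ⟨by rw [Finset.inter_comm]; exact h.hx, by rw [Finset.union_comm]; exact h.hV,
   by rw [Finset.union_comm]; exact h.hA⟩

lemma verts₁_subset (h : Decomp D D₁ D₂ x) : D₁.verts ⊆ D.verts := by
  rw [h.hV]; exact Finset.subset_union_left

lemma verts₂_subset (h : Decomp D D₁ D₂ x) : D₂.verts ⊆ D.verts := by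
  rw [h.hV]; exact Finset.subset_union_right

lemma arcs₁_subset (h : Decomp D D₁ D₂ x) : D₁.arcs ⊆ D.arcs := by
  rw [h.hA]; exact Finset.subset_union_left

lemma arcs₂_subset (h : Decomp D D₁ D₂ x) : D₂.arcs ⊆ D.arcs := by
  rw [h.hA]; exact Finset.subset_union_right

lemma eq_x_of_mem_both (h : Decomp D D₁ D₂ x) {v : ℕ} (h1 : v ∈ D₁.verts)
    (h2 : v ∈ D₂.verts) : v = x := by
  have : v ∈ D₁.verts ∩ D₂.verts := Finset.mem_inter.mpr ⟨h1, h2⟩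
  rw [h.hx, Finset.mem_singleton] at this; exact this

/-- an arc of `D` incident to a vertex of `D₁` other than `x` is an arc of `D₁`. -/
lemma arc_mem₁_of_fst (h : Decomp D D₁ D₂ x) {a : ℕ × ℕ} (ha : a ∈ D.arcs)
    (h1 : a.1 ∈ D₁.verts) (hne : a.1 ≠ x) : a ∈ D₁.arcs := by
  rw [h.hA, Finset.mem_union] at ha
  rcases ha with ha | ha
  · exact ha
  · exact absurd (h.eq_x_of_mem_both h1 (D₂.mem_fst a ha)) hne

lemma arc_mem₁_of_snd (h : Decomp D D₁ D₂ x) {a : ℕ × ℕ} (ha : a ∈ D.arcs)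
    (h1 : a.2 ∈ D₁.verts) (hne : a.2 ≠ x) : a ∈ D₁.arcs := by
  rw [h.hA, Finset.mem_union] at ha
  rcases ha with ha | ha
  · exact ha
  · exact absurd (h.eq_x_of_mem_both h1 (D₂.mem_snd a ha)) hne

/-- the neighbourhood of an internal vertex of `D₁` is inside `D₁`. -/
lemma ugNbrs_subset (h : Decomp D D₁ D₂ x) {v : ℕ} (h1 : v ∈ D₁.verts) (hne : v ≠ x) :
    D.ugNbrs v ⊆ D₁.verts := by
  intro w hw
  rw [mem_ugNbrs] at hw
  rcases hw with hw | hw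
  · exact D₁.mem_fst _ (h.arc_mem₁_of_snd hw h1 hne)
  · exact D₁.mem_snd _ (h.arc_mem₁_of_fst hw h1 hne)

/-- a walk in `D − x` starting in `D₁` stays in `D₁`. -/
lemma walk_confined (h : Decomp D D₁ D₂ x) {u v : ℕ}
    (hw : Relation.ReflTransGen (D.del {x}).ugAdj u v) (hu : u ∈ D₁.verts) :
    v ∈ D₁.verts := by
  induction hw with
  | refl => exact hu
  | tail _ hadj ih =>
      rename_i b c _
      obtain ⟨hb, hc, harc⟩ := hadj
      simp only [del_verts, Finset.mem_sdiff, Finset.mem_singleton] at hb hc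
      rcases harc with harc | harc
      · rw [mem_del_arcs] at harc
        simp only [Finset.mem_singleton] at harc
        exact D₁.mem_snd _ (h.arc_mem₁_of_fst harc.1 ih harc.2.1)
      · rw [mem_del_arcs] at harc
        simp only [Finset.mem_singleton] at harc
        exact D₁.mem_fst _ (h.arc_mem₁_of_snd harc.1 ih harc.2.2)

/-- if both sides are nontrivial, `x` is a cut vertex so `D` is not biconnected. -/
lemma not_biconnected (h : Decomp D D₁ D₂ x) {v₁ v₂ : ℕ}
    (h1 : v₁ ∈ D₁.verts) (h1x : v₁ ≠ x) (h2 : v₂ ∈ D₂.verts) (h2x : v₂ ≠ x) :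
    ¬ D.Biconnected := by
  rintro ⟨-, -, hdel⟩
  have hx : x ∈ D.verts := h.verts₁_subset h.x_mem₁
  have hcon := hdel x hx
  have hm1 : v₁ ∈ (D.del {x}).verts := by
    simp only [del_verts, Finset.mem_sdiff, Finset.mem_singleton]
    exact ⟨h.verts₁_subset h1, h1x⟩
  have hm2 : v₂ ∈ (D.del {x}).verts := by
    simp only [del_verts, Finset.mem_sdiff, Finset.mem_singleton]
    exact ⟨h.verts₂_subset h2, h2x⟩
  have := h.walk_confined (hcon.2 v₁ hm1 v₂ hm2) h1
  exact h2x (h.eq_x_of_mem_both this h2)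

/-- a walk in a subdigraph `A` of `D` ending at `x`, starting in `D₁`, can be
confined to `inter A D₁`. -/
lemma walk_to_x (h : Decomp D D₁ D₂ x) (hAa : A.arcs ⊆ D.arcs) {v : ℕ}
    (hw : Relation.ReflTransGen A.ugAdj v x) (hv : v ∈ D₁.verts) :
    Relation.ReflTransGen (inter A D₁).ugAdj v x := by
  induction hw using Relation.ReflTransGen.head_induction_on with
  | refl => exact .refl
  | head hadj _ ih =>
      rename_i a c _
      by_cases hax : a = x
      · subst hax
        exact .refl
      · obtain ⟨ha, hc, harc⟩ := hadj
        have harc' : (∃ b, b ∈ A.arcs ∩ D₁.arcs ∧ (b = (a, c) ∨ b = (c, a))) := by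
          rcases harc with harc | harc
          · exact ⟨(a, c), Finset.mem_inter.mpr ⟨harc, h.arc_mem₁_of_fst (hAa harc) hv hax⟩,
              Or.inl rfl⟩
          · exact ⟨(c, a), Finset.mem_inter.mpr ⟨harc, h.arc_mem₁_of_snd (hAa harc) hv hax⟩,
              Or.inr rfl⟩
        obtain ⟨b, hb, hb'⟩ := harc'
        have hcD1 : c ∈ D₁.verts := by
          rcases hb' with rfl | rfl
          · exact D₁.mem_snd _ (Finset.mem_inter.mp hb).2
          · exact D₁.mem_fst _ (Finset.mem_inter.mp hb).2
        refine Relation.ReflTransGen.head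
          ⟨Finset.mem_inter.mpr ⟨ha, hv⟩, Finset.mem_inter.mpr ⟨hc, hcD1⟩, ?_⟩ (ih hcD1)
        rcases hb' with rfl | rfl
        · exact Or.inl hb
        · exact Or.inr hb

/-- connectivity of the piece `inter A D₁` of a connected subdigraph `A` containing `x`. -/
lemma inter_connected (h : Decomp D D₁ D₂ x) (hAa : A.arcs ⊆ D.arcs)
    (hAc : A.Connected) (hxA : x ∈ A.verts) (hxD : x ∈ D₁.verts) :
    (inter A D₁).Connected := by
  refine connected_of_hub (x := x) (Finset.mem_inter.mpr ⟨hxA, hxD⟩) ?_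
  intro v hv
  rw [inter_verts, Finset.mem_inter] at hv
  exact h.walk_to_x hAa (hAc.2 v hv.1 x hxA) hv.2

end Decomp

end Digraph'
namespace Digraph'

variable {D H A B D₁ D₂ : Digraph'}

lemma even_handshake (D : Digraph') (S : Finset ℕ) :
    Even (∑ v ∈ S, ((D.ugNbrs v) ∩ S).card) := by
  classical
  set P : Finset (ℕ × ℕ) := (S ×ˢ S).filter (fun p => p.1 ∈ D.ugNbrs p.2) with hP
  have hsum : ∑ v ∈ S, ((D.ugNbrs v) ∩ S).card = P.card := by
    rw [Finset.card_eq_sum_card_fiberwise (f := Prod.snd) (t := S)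
      (fun p hp => by
        simp only [Finset.mem_coe, hP, Finset.mem_filter, Finset.mem_product] at hp
        exact hp.1.2)]
    refine Finset.sum_congr rfl (fun v hv => ?_)
    have himg : P.filter (fun p => p.2 = v) = ((D.ugNbrs v) ∩ S).image (fun w => (w, v)) := by
      ext p
      simp only [hP, Finset.mem_filter, Finset.mem_product, Finset.mem_image,
        Finset.mem_inter]
      constructor
      · rintro ⟨⟨⟨hs1, hs2⟩, hnb⟩, h2⟩
        exact ⟨p.1, ⟨by rwa [h2] at hnb, hs1⟩, by rw [← h2]⟩
      · rintro ⟨w, ⟨hnb, hws⟩, rfl⟩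
        exact ⟨⟨⟨hws, hv⟩, hnb⟩, rfl⟩
    rw [himg, Finset.card_image_of_injective _ (fun a b hab => by
      simpa using congrArg Prod.fst hab)]
  rw [hsum]
  have hirr : ∀ p ∈ P, p.1 ≠ p.2 := by
    intro p hp h
    simp only [hP, Finset.mem_filter] at hp
    rw [h] at hp
    exact not_mem_ugNbrs_self hp.2
  have hsplit : P = P.filter (fun p => p.1 < p.2) ∪ P.filter (fun p => p.2 < p.1) := by
    ext p
    simp only [Finset.mem_union, Finset.mem_filter]
    constructor
    · intro hp
      rcases lt_or_gt_of_ne (hirr p hp) with h | h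
      · exact Or.inl ⟨hp, h⟩
      · exact Or.inr ⟨hp, h⟩
    · rintro (⟨hp, _⟩ | ⟨hp, _⟩) <;> exact hp
  have hswap : P.filter (fun p => p.2 < p.1) = (P.filter (fun p => p.1 < p.2)).image Prod.swap := by
    ext p
    simp only [Finset.mem_filter, Finset.mem_image, hP, Finset.mem_product]
    constructor
    · rintro ⟨⟨⟨h1, h2⟩, hn⟩, hlt⟩
      refine ⟨(p.2, p.1), ⟨⟨⟨h2, h1⟩, ?_⟩, hlt⟩, by simp [Prod.ext_iff]⟩
      show p.2 ∈ D.ugNbrs p.1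
      rwa [ugNbrs_comm]
    · rintro ⟨q, ⟨⟨⟨h1, h2⟩, hn⟩, hlt⟩, rfl⟩
      refine ⟨⟨⟨h2, h1⟩, ?_⟩, by simpa using hlt⟩
      show q.2 ∈ D.ugNbrs q.1
      rwa [ugNbrs_comm]
  rw [hsplit, Finset.card_union_of_disjoint, hswap,
    Finset.card_image_of_injective _ Prod.swap_injective]
  · exact ⟨_, rfl⟩
  · rw [Finset.disjoint_left]
    intro p hp1 hp2
    simp only [Finset.mem_filter] at hp1 hp2
    omega

lemma Decomp.side_even {x : ℕ} (h : Decomp D D₁ D₂ x)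
    (hcyc : ∀ v ∈ D.verts, (D.ugNbrs v).card = 2) :
    Even ((D.ugNbrs x ∩ (D₁.verts \ {x})).card) := by
  classical
  set S₁ := D₁.verts \ {x} with hS₁
  have hkey : ∀ v ∈ S₁, ((D.ugNbrs v) ∩ S₁).card + (if x ∈ D.ugNbrs v then 1 else 0) = 2 := by
    intro v hv
    rw [hS₁, Finset.mem_sdiff, Finset.mem_singleton] at hv
    have hNv : D.ugNbrs v ⊆ D₁.verts := h.ugNbrs_subset hv.1 hv.2
    have hcv : (D.ugNbrs v).card = 2 := hcyc v (h.verts₁_subset hv.1)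
    have heq : (D.ugNbrs v) ∩ S₁ = (D.ugNbrs v) \ {x} := by
      ext w
      rw [hS₁]
      simp only [Finset.mem_inter, Finset.mem_sdiff, Finset.mem_singleton]
      exact ⟨fun ⟨a, b, c⟩ => ⟨a, c⟩, fun ⟨a, c⟩ => ⟨a, hNv a, c⟩⟩
    rw [heq]
    by_cases hx : x ∈ D.ugNbrs v
    · rw [Finset.card_sdiff_of_subset (Finset.singleton_subset_iff.mpr hx), hcv, if_pos hx]
      simp
    · rw [Finset.sdiff_eq_self_of_disjoint (Finset.disjoint_singleton_right.mpr hx), hcv,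
        if_neg hx]
  have hsum2 : ∑ v ∈ S₁, (((D.ugNbrs v) ∩ S₁).card + (if x ∈ D.ugNbrs v then 1 else 0))
      = 2 * S₁.card := by
    rw [Finset.sum_congr rfl hkey, Finset.sum_const, smul_eq_mul, mul_comm]
  rw [Finset.sum_add_distrib] at hsum2
  have heven := even_handshake D S₁
  have hfc : ∑ v ∈ S₁, (if x ∈ D.ugNbrs v then 1 else 0) = (S₁.filter (fun v => x ∈ D.ugNbrs v)).card := by
    rw [Finset.card_filter]
  have hfeq : S₁.filter (fun v => x ∈ D.ugNbrs v) = D.ugNbrs x ∩ S₁ := by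
    ext w
    simp only [Finset.mem_filter, Finset.mem_inter]
    rw [ugNbrs_comm]
    exact ⟨fun ⟨a, b⟩ => ⟨b, a⟩, fun ⟨a, b⟩ => ⟨b, a⟩⟩
  rw [hfc, hfeq] at hsum2
  obtain ⟨k, hk⟩ := heven
  have : (D.ugNbrs x ∩ S₁).card = 2 * S₁.card - (k + k) := by omega
  rw [this]
  rw [Nat.even_sub (by omega)]
  constructor
  · intro _; exact ⟨k, rfl⟩
  · intro _; exact ⟨S₁.card, by ring⟩

lemma Decomp.not_cycleUG {x : ℕ} (h : Decomp D D₁ D₂ x)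
    (h₁c : D₁.Connected) (h₂c : D₂.Connected)
    (hc1 : 2 ≤ D₁.verts.card) (hc2 : 2 ≤ D₂.verts.card) (hcyc : D.IsCycleUG) : False := by
  classical
  have hdeg := hcyc.2
  have he1 := h.side_even hdeg
  have he2 := h.symm.side_even hdeg
  -- each side contains a neighbour of x
  have hge : ∀ (E₁ E₂ : Digraph'), Decomp D E₁ E₂ x → E₁.Connected → 2 ≤ E₁.verts.card →
      1 ≤ (D.ugNbrs x ∩ (E₁.verts \ {x})).card := by
    intro E₁ E₂ hd hc hcard
    obtain ⟨w, hw⟩ := exists_nbr_of_connected hc hd.x_mem₁ hcard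
    refine Finset.card_pos.mpr ⟨w, Finset.mem_inter.mpr ⟨?_, ?_⟩⟩
    · rw [mem_ugNbrs] at hw ⊢
      exact hw.imp (fun t => hd.arcs₁_subset t) (fun t => hd.arcs₁_subset t)
    · rw [Finset.mem_sdiff, Finset.mem_singleton]
      refine ⟨ugNbrs_subset_verts hw, fun hwx => ?_⟩
      subst hwx
      exact not_mem_ugNbrs_self hw
  have hg1 := hge D₁ D₂ h h₁c hc1
  have hg2 := hge D₂ D₁ h.symm h₂c hc2
  -- the two sides partition the neighbourhood of x
  have hx : x ∈ D.verts := h.verts₁_subset h.x_mem₁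
  have hcard : (D.ugNbrs x ∩ (D₁.verts \ {x})).card + (D.ugNbrs x ∩ (D₂.verts \ {x})).card = 2 := by
    rw [← hdeg x hx]
    rw [← Finset.card_union_of_disjoint]
    · congr 1
      rw [← Finset.inter_union_distrib_left]
      refine (Finset.inter_eq_left.mpr ?_)
      intro w hw
      have hwv : w ∈ D.verts := ugNbrs_subset_verts hw
      have hwx : w ≠ x := fun hh => not_mem_ugNbrs_self (hh ▸ hw)
      rw [h.hV, Finset.mem_union] at hwv
      simp only [Finset.mem_union, Finset.mem_sdiff, Finset.mem_singleton]
      rcases hwv with hwv | hwv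
      · exact Or.inl ⟨hwv, hwx⟩
      · exact Or.inr ⟨hwv, hwx⟩
    · rw [Finset.disjoint_left]
      intro w hw1 hw2
      simp only [Finset.mem_inter, Finset.mem_sdiff, Finset.mem_singleton] at hw1 hw2
      exact hw1.2.2 (h.eq_x_of_mem_both hw1.2.1 hw2.2.1)
  obtain ⟨a, ha⟩ := he1
  obtain ⟨b, hb⟩ := he2
  omega

lemma Decomp.not_bidirectedComplete {x : ℕ} (h : Decomp D D₁ D₂ x) {v₁ v₂ : ℕ}
    (h1 : v₁ ∈ D₁.verts) (h1x : v₁ ≠ x) (h2 : v₂ ∈ D₂.verts) (h2x : v₂ ≠ x)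
    (hD : D.BidirectedComplete) : False := by
  have hne : v₁ ≠ v₂ := fun hh => h1x (h.eq_x_of_mem_both h1 (hh ▸ h2))
  have harc := hD v₁ (h.verts₁_subset h1) v₂ (h.verts₂_subset h2) hne
  rw [h.hA, Finset.mem_union] at harc
  rcases harc with harc | harc
  · exact h2x (h.eq_x_of_mem_both (D₁.mem_snd _ harc) h2)
  · exact h1x (h.eq_x_of_mem_both h1 (D₂.mem_fst _ harc))

end Digraph'
namespace Digraph'

variable {D H A B D₁ D₂ : Digraph'} {s : ℕ} {F G : Fin s → ℕ → ℕ × ℕ}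

lemma arcs_eq_empty_of_verts_singleton {y : ℕ} (h : D.verts = {y}) : D.arcs = ∅ := by
  ext a
  simp only [Finset.notMem_empty, iff_false]
  intro ha
  have h1 := D.mem_fst a ha
  have h2 := D.mem_snd a ha
  rw [h, Finset.mem_singleton] at h1 h2
  exact D.no_loops a ha (h1.trans h2.symm)

lemma Decomp.eq_of_left_singleton {x : ℕ} (h : Decomp D D₁ D₂ x) (hv : D₁.verts = {x}) :
    D = D₂ := by
  refine ext' ?_ ?_
  · rw [h.hV, hv, Finset.union_eq_right.mpr]
    rw [Finset.singleton_subset_iff]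
    exact h.x_mem₂
  · rw [h.hA, arcs_eq_empty_of_verts_singleton hv, Finset.empty_union]

lemma IsHardPair.congr (h : IsHardPair s D F)
    (hFG : ∀ k : Fin s, ∀ v ∈ D.verts, F k v = G k v) : IsHardPair s D G := by
  cases h with
  | mono i hbi hi hk =>
      exact .mono i hbi (fun v hv => (hFG i v hv) ▸ hi v hv)
        (fun k hki v hv => (hFG k v hv) ▸ hk k hki v hv)
  | bicycle i j hij hD hi hj hk =>
      exact .bicycle i j hij hD (fun v hv => (hFG i v hv) ▸ hi v hv)
        (fun v hv => (hFG j v hv) ▸ hj v hv)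
        (fun k hki hkj v hv => (hFG k v hv) ▸ hk k hki hkj v hv)
  | complete hD hconst hsym hsum =>
      refine .complete hD (fun k u hu v hv => ?_) (fun k v hv => ?_) (fun v hv => ?_)
      · rw [← hFG k u hu, ← hFG k v hv]; exact hconst k u hu v hv
      · rw [← hFG k v hv]; exact hsym k v hv
      · rw [← Finset.sum_congr rfl (fun k _ => congrArg Prod.snd (hFG k v hv))]
        exact hsum v hv
  | join E₁ E₂ F₁ F₂ y h₁ h₂ hx hV hA hF₁ hF₂ hFx =>
      have hd : Decomp D E₁ E₂ y := ⟨hx, hV, hA⟩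
      refine .join E₁ E₂ F₁ F₂ y h₁ h₂ hx hV hA ?_ ?_ ?_
      · intro k v hv hvy
        rw [← hFG k v (hd.verts₁_subset hv)]; exact hF₁ k v hv hvy
      · intro k v hv hvy
        rw [← hFG k v (hd.verts₂_subset hv)]; exact hF₂ k v hv hvy
      · intro k
        rw [← hFG k y (hd.verts₁_subset hd.x_mem₁)]; exact hFx k

lemma IsHardPair.connected (h : IsHardPair s D F) (hne : D.verts.Nonempty) :
    D.Connected := by
  revert hne
  induction h with
  | mono i hbi hi hk => exact fun _ => hbi.2.1
  | bicycle i j hij hD hi hj hk => exact fun _ => hD.2.1.1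
  | complete hD hconst hsym hsum =>
      intro hne
      refine ⟨hne, fun u hu v hv => ?_⟩
      by_cases huv : u = v
      · subst huv; exact .refl
      · exact .single ⟨hu, hv, Or.inl (hD u hu v hv huv)⟩
  | join E₁ E₂ F₁ F₂ y h₁ h₂ hx hV hA hF₁ hF₂ hFx ih₁ ih₂ =>
      intro hne
      have hd : Decomp _ E₁ E₂ y := ⟨hx, hV, hA⟩
      have hc₁ := ih₁ ⟨y, hd.x_mem₁⟩
      have hc₂ := ih₂ ⟨y, hd.x_mem₂⟩
      refine connected_of_hub (x := y) (hd.verts₁_subset hd.x_mem₁) ?_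
      intro v hv
      rw [hd.hV, Finset.mem_union] at hv
      rcases hv with hv | hv
      · exact rtg_mono hd.verts₁_subset hd.arcs₁_subset (hc₁.2 v hv y hd.x_mem₁)
      · exact rtg_mono hd.verts₂_subset hd.arcs₂_subset (hc₂.2 v hv y hd.x_mem₂)

lemma IsHardPair.f_eq_zero_of_singleton (h : IsHardPair s D F) {y : ℕ}
    (hv : D.verts = {y}) : ∀ k, F k y = (0, 0) := by
  revert hv
  induction h with
  | mono i hbi hi hk =>
      intro hv
      exfalso
      have := hbi.1
      rw [hv, Finset.card_singleton] at this
      omega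
  | bicycle i j hij hD hi hj hk =>
      rename_i E G0
      intro hv
      exfalso
      have h2 := hD.2.1.2 y (by rw [hv]; exact Finset.mem_singleton_self y)
      have hemp : E.ugNbrs y = ∅ := by
        ext w
        simp [mem_ugNbrs, arcs_eq_empty_of_verts_singleton hv]
      rw [hemp] at h2
      simp at h2
  | complete hD hconst hsym hsum =>
      rename_i E G0
      intro hv k
      have hy : y ∈ E.verts := by rw [hv]; exact Finset.mem_singleton_self y
      have hs := hsum y hy
      rw [hv, Finset.card_singleton] at hs
      simp only [Nat.sub_self] at hs
      have h2 : (G0 k y).2 = 0 := by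
        by_contra hh
        have hpos : 0 < ∑ i, (G0 i y).2 :=
          Finset.sum_pos' (fun i _ => Nat.zero_le _) ⟨k, Finset.mem_univ k, Nat.pos_of_ne_zero hh⟩
        omega
      have h1 := hsym k y hy
      exact Prod.ext (by omega) h2
  | join E₁ E₂ F₁ F₂ z h₁ h₂ hx hV hA hF₁ hF₂ hFx ih₁ ih₂ =>
      intro hv
      have hd : Decomp _ E₁ E₂ z := ⟨hx, hV, hA⟩
      have hzy : z = y := by
        have := hd.verts₁_subset hd.x_mem₁
        rw [hv, Finset.mem_singleton] at this
        exact this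
      have hv₁ : E₁.verts = {y} := by
        refine Finset.Subset.antisymm (hv ▸ hd.verts₁_subset) ?_
        rw [Finset.singleton_subset_iff, ← hzy]
        exact hd.x_mem₁
      have hv₂ : E₂.verts = {y} := by
        refine Finset.Subset.antisymm (hv ▸ hd.verts₂_subset) ?_
        rw [Finset.singleton_subset_iff, ← hzy]
        exact hd.x_mem₂
      intro k
      have := hFx k
      rw [hzy] at this
      rw [this, ih₁ hv₁ k, ih₂ hv₂ k]
      rfl

end Digraph'
namespace Digraph'

variable {D H A B D₁ D₂ : Digraph'} {s : ℕ} {F G : Fin s → ℕ → ℕ × ℕ}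

/-- The three atomic shapes of hard pairs. -/
def ClassifiedHard (s : ℕ) (D : Digraph') (F : Fin s → ℕ → ℕ × ℕ) : Prop :=
  (∃ i : Fin s, (∀ v ∈ D.verts, F i v = (D.inDeg v, D.outDeg v)) ∧
     ∀ k, k ≠ i → ∀ v ∈ D.verts, F k v = (0, 0)) ∨
  (∃ i j : Fin s, i ≠ j ∧ D.BidirectedOddCycle ∧ (∀ v ∈ D.verts, F i v = (1, 1)) ∧
     (∀ v ∈ D.verts, F j v = (1, 1)) ∧ ∀ k, k ≠ i → k ≠ j → ∀ v ∈ D.verts, F k v = (0, 0)) ∨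
  (D.BidirectedComplete ∧ (∀ k : Fin s, ∀ u ∈ D.verts, ∀ v ∈ D.verts, F k u = F k v) ∧
     (∀ k : Fin s, ∀ v ∈ D.verts, (F k v).1 = (F k v).2) ∧
     ∀ v ∈ D.verts, ∑ k, (F k v).2 = D.verts.card - 1)

lemma ClassifiedHard.congr (h : ClassifiedHard s D F)
    (hFG : ∀ k : Fin s, ∀ v ∈ D.verts, F k v = G k v) : ClassifiedHard s D G := by
  rcases h with ⟨i, hi, hk⟩ | ⟨i, j, hij, hD, hi, hj, hk⟩ | ⟨hD, hconst, hsym, hsum⟩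
  · exact Or.inl ⟨i, fun v hv => (hFG i v hv) ▸ hi v hv,
      fun k hki v hv => (hFG k v hv) ▸ hk k hki v hv⟩
  · exact Or.inr (Or.inl ⟨i, j, hij, hD, fun v hv => (hFG i v hv) ▸ hi v hv,
      fun v hv => (hFG j v hv) ▸ hj v hv,
      fun k hki hkj v hv => (hFG k v hv) ▸ hk k hki hkj v hv⟩)
  · refine Or.inr (Or.inr ⟨hD, fun k u hu v hv => ?_, fun k v hv => ?_, fun v hv => ?_⟩)
    · rw [← hFG k u hu, ← hFG k v hv]; exact hconst k u hu v hv
    · rw [← hFG k v hv]; exact hsym k v hv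
    · rw [← Finset.sum_congr rfl (fun k _ => congrArg Prod.snd (hFG k v hv))]
      exact hsum v hv

lemma ClassifiedHard.isHardPair (h : ClassifiedHard s D F) (hbi : D.Biconnected) :
    IsHardPair s D F := by
  rcases h with ⟨i, hi, hk⟩ | ⟨i, j, hij, hD, hi, hj, hk⟩ | ⟨hD, hconst, hsym, hsum⟩
  · exact .mono i hbi hi (fun k hki v hv => hk k hki v hv)
  · exact .bicycle i j hij hD hi hj hk
  · exact .complete hD hconst hsym hsum

/-- classification of biconnected hard pairs. -/
lemma IsHardPair.classify (h : IsHardPair s D F) (hbi : D.Biconnected) :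
    ClassifiedHard s D F := by
  revert hbi
  induction h with
  | mono i hbi' hi hk => exact fun _ => Or.inl ⟨i, hi, fun k hki v hv => hk k hki v hv⟩
  | bicycle i j hij hD hi hj hk =>
      exact fun _ => Or.inr (Or.inl ⟨i, j, hij, hD, hi, hj,
        fun k hki hkj v hv => hk k hki hkj v hv⟩)
  | complete hD hconst hsym hsum => exact fun _ => Or.inr (Or.inr ⟨hD, hconst, hsym, hsum⟩)
  | join E₁ E₂ F₁ F₂ z h₁ h₂ hx hV hA hF₁ hF₂ hFx ih₁ ih₂ =>
      intro hbi
      have hd : Decomp _ E₁ E₂ z := ⟨hx, hV, hA⟩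
      by_cases hs₁ : E₁.verts = {z}
      · have hDE : _ = E₂ := hd.eq_of_left_singleton hs₁
        have hcl := ih₂ (hDE ▸ hbi)
        have hz := h₁.f_eq_zero_of_singleton hs₁
        rw [← hDE] at hcl
        refine hcl.congr ?_
        intro k v hv
        by_cases hvz : v = z
        · subst hvz
          rw [hFx k, hz k]
          simp
        · refine (hF₂ k v ?_ hvz).symm
          rw [← hDE]; exact hv
      · by_cases hs₂ : E₂.verts = {z}
        · have hDE : _ = E₁ := hd.symm.eq_of_left_singleton hs₂
          have hcl := ih₁ (hDE ▸ hbi)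
          have hz := h₂.f_eq_zero_of_singleton hs₂
          rw [← hDE] at hcl
          refine hcl.congr ?_
          intro k v hv
          by_cases hvz : v = z
          · subst hvz
            rw [hFx k, hz k]
            simp
          · refine (hF₁ k v ?_ hvz).symm
            rw [← hDE]; exact hv
        · exfalso
          have hne₁ : ∃ v₁ ∈ E₁.verts, v₁ ≠ z := by
            by_contra hc
            push_neg at hc
            exact hs₁ (Finset.eq_singleton_iff_unique_mem.mpr ⟨hd.x_mem₁, fun w hw => hc w hw⟩)
          have hne₂ : ∃ v₂ ∈ E₂.verts, v₂ ≠ z := by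
            by_contra hc
            push_neg at hc
            exact hs₂ (Finset.eq_singleton_iff_unique_mem.mpr ⟨hd.x_mem₂, fun w hw => hc w hw⟩)
          obtain ⟨v₁, hv₁, hv₁z⟩ := hne₁
          obtain ⟨v₂, hv₂, hv₂z⟩ := hne₂
          exact hd.not_biconnected hv₁ hv₁z hv₂ hv₂z hbi

end Digraph'
namespace Digraph'

variable {D H A B D₁ D₂ E₁ E₂ : Digraph'} {s : ℕ} {F G : Fin s → ℕ → ℕ × ℕ}

namespace Decomp

variable {x y : ℕ}

lemma mem_both_iff (h : Decomp D D₁ D₂ x) {w : ℕ} :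
    w ∈ D₁.verts ∧ w ∈ D₂.verts ↔ w = x := by
  rw [← Finset.mem_inter, h.hx, Finset.mem_singleton]

lemma arcs_disjoint (h : Decomp D D₁ D₂ x) {a : ℕ × ℕ} (h1 : a ∈ D₁.arcs)
    (h2 : a ∈ D₂.arcs) : False := by
  have e1 : a.1 = x := h.mem_both_iff.mp ⟨D₁.mem_fst a h1, D₂.mem_fst a h2⟩
  have e2 : a.2 = x := h.mem_both_iff.mp ⟨D₁.mem_snd a h1, D₂.mem_snd a h2⟩
  exact D₁.no_loops a h1 (e1.trans e2.symm)

lemma arcs_subset_of_verts_subset (h : Decomp D D₁ D₂ x)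
    (hA : A.arcs ⊆ D.arcs) (hv : A.verts ⊆ D₁.verts) : A.arcs ⊆ D₁.arcs := by
  intro a ha
  have := hA ha
  rw [h.hA, Finset.mem_union] at this
  rcases this with h1 | h2
  · exact h1
  · exfalso
    have e1 : a.1 = x := h.mem_both_iff.mp ⟨hv (A.mem_fst a ha), D₂.mem_fst a h2⟩
    have e2 : a.2 = x := h.mem_both_iff.mp ⟨hv (A.mem_snd a ha), D₂.mem_snd a h2⟩
    exact A.no_loops a ha (e1.trans e2.symm)

lemma verts_subset_of_avoid (h : Decomp D D₁ D₂ x)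
    (hA : A.arcs ⊆ D.arcs) (hAv : A.verts ⊆ D.verts) (hc : A.Connected)
    (hxA : x ∉ A.verts) (hy : y ∈ A.verts) (hyD : y ∈ D₁.verts) : A.verts ⊆ D₁.verts := by
  intro v hv
  have hwalk := hc.2 y hy v hv
  have hmono : ∀ a b : ℕ, A.ugAdj a b → (D.del {x}).ugAdj a b := by
    intro a b ⟨ha, hb, harc⟩
    refine ⟨?_, ?_, ?_⟩
    · simp only [del_verts, Finset.mem_sdiff, Finset.mem_singleton]
      exact ⟨hAv ha, fun hh => hxA (hh ▸ ha)⟩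
    · simp only [del_verts, Finset.mem_sdiff, Finset.mem_singleton]
      exact ⟨hAv hb, fun hh => hxA (hh ▸ hb)⟩
    · rcases harc with harc | harc
      · refine Or.inl ?_
        rw [mem_del_arcs]
        refine ⟨hA harc, ?_, ?_⟩ <;> simp only [Finset.mem_singleton]
        · exact fun hh => hxA (hh ▸ ha)
        · exact fun hh => hxA (hh ▸ hb)
      · refine Or.inr ?_
        rw [mem_del_arcs]
        refine ⟨hA harc, ?_, ?_⟩ <;> simp only [Finset.mem_singleton]
        · exact fun hh => hxA (hh ▸ hb)
        · exact fun hh => hxA (hh ▸ ha)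
  exact h.walk_confined (Relation.ReflTransGen.mono hmono _ _ hwalk) hyD

/-- decomposition of the piece `inter A D₁` of a decomposable digraph containing `x`. -/
lemma inter_decomp (h : Decomp D D₁ D₂ x) (hAv : A.verts ⊆ D.verts)
    (hAa : A.arcs ⊆ D.arcs) (hxA : x ∈ A.verts) :
    Decomp A (inter A D₁) (inter A D₂) x := by
  refine ⟨?_, ?_, ?_⟩
  · ext w
    simp only [inter_verts, Finset.mem_inter, Finset.mem_singleton]
    constructor
    · rintro ⟨⟨hw1, hw2⟩, ⟨hw3, hw4⟩⟩
      exact h.mem_both_iff.mp ⟨hw2, hw4⟩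
    · rintro rfl
      exact ⟨⟨hxA, h.x_mem₁⟩, ⟨hxA, h.x_mem₂⟩⟩
  · ext w
    simp only [inter_verts, Finset.mem_union, Finset.mem_inter]
    constructor
    · intro hw
      have := hAv hw
      rw [h.hV, Finset.mem_union] at this
      exact this.imp (fun t => ⟨hw, t⟩) (fun t => ⟨hw, t⟩)
    · rintro (⟨hw, _⟩ | ⟨hw, _⟩) <;> exact hw
  · ext a
    simp only [inter_arcs, Finset.mem_union, Finset.mem_inter]
    constructor
    · intro ha
      have := hAa ha
      rw [h.hA, Finset.mem_union] at this
      exact this.imp (fun t => ⟨ha, t⟩) (fun t => ⟨ha, t⟩)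
    · rintro (⟨ha, _⟩ | ⟨ha, _⟩) <;> exact ha

end Decomp

end Digraph'
namespace Digraph'

variable {D H A B D₁ D₂ E₁ E₂ : Digraph'} {s : ℕ} {F G : Fin s → ℕ → ℕ × ℕ}

/-- `F` splits at `x` into hard pairs on `D₁` and `D₂`. -/
def SplitAt (s : ℕ) (F : Fin s → ℕ → ℕ × ℕ) (D₁ D₂ : Digraph') (x : ℕ) : Prop :=
  ∃ G₁ G₂ : Fin s → ℕ → ℕ × ℕ, IsHardPair s D₁ G₁ ∧ IsHardPair s D₂ G₂ ∧
    (∀ k : Fin s, ∀ v ∈ D₁.verts, v ≠ x → G₁ k v = F k v) ∧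
    (∀ k : Fin s, ∀ v ∈ D₂.verts, v ≠ x → G₂ k v = F k v) ∧
    (∀ k : Fin s, F k x = ((G₁ k x).1 + (G₂ k x).1, (G₁ k x).2 + (G₂ k x).2))

lemma SplitAt.symm {x : ℕ} (h : SplitAt s F D₁ D₂ x) : SplitAt s F D₂ D₁ x := by
  obtain ⟨G₁, G₂, h1, h2, h3, h4, h5⟩ := h
  exact ⟨G₂, G₁, h2, h1, h4, h3, fun k => by rw [h5 k, Nat.add_comm, Nat.add_comm (G₁ k x).2]⟩

lemma splitAt_trivial {x : ℕ} (h : IsHardPair s D F) (hd : Decomp D D₁ D₂ x)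
    (hs₁ : D₁.verts = {x}) : SplitAt s F D₁ D₂ x := by
  refine ⟨fun _ _ => (0, 0), F, ?_, ?_, ?_, ?_, ?_⟩
  · refine .complete ?_ (fun _ _ _ _ _ => rfl) (fun _ _ _ => rfl) ?_
    · intro u hu v hv huv
      rw [hs₁, Finset.mem_singleton] at hu hv
      exact absurd (hu.trans hv.symm) huv
    · intro v hv
      rw [hs₁]
      simp
  · exact (hd.eq_of_left_singleton hs₁) ▸ h
  · intro k v hv hvx
    rw [hs₁, Finset.mem_singleton] at hv
    exact absurd hv hvx
  · exact fun _ _ _ _ => rfl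
  · intro k
    simp

lemma Decomp.exists_ne {x : ℕ} (hd : Decomp D D₁ D₂ x) (hne : D₁.verts ≠ {x}) :
    ∃ v ∈ D₁.verts, v ≠ x := by
  by_contra hc
  push_neg at hc
  exact hne (Finset.eq_singleton_iff_unique_mem.mpr ⟨hd.x_mem₁, fun w hw => hc w hw⟩)

lemma split_join_aux {H₁ H₂ : Fin s → ℕ → ℕ × ℕ} {x y : ℕ}
    (hdD : Decomp D E₁ E₂ y)
    (h₁ : IsHardPair s E₁ H₁) (h₂ : IsHardPair s E₂ H₂)
    (hF₁ : ∀ k : Fin s, ∀ v ∈ E₁.verts, v ≠ y → F k v = H₁ k v)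
    (hF₂ : ∀ k : Fin s, ∀ v ∈ E₂.verts, v ≠ y → F k v = H₂ k v)
    (hFx : ∀ k : Fin s, F k y = ((H₁ k y).1 + (H₂ k y).1, (H₁ k y).2 + (H₂ k y).2))
    (hdX : Decomp D D₁ D₂ x)
    (hyx : y ≠ x) (hyD₁ : y ∈ D₁.verts) (hxE₁ : x ∈ E₁.verts) (hxE₂ : x ∉ E₂.verts)
    (IH₁ : ∀ (P Q : Digraph') (z : ℕ), Decomp E₁ P Q z → P.Connected → Q.Connected →
      SplitAt s H₁ P Q z) :
    SplitAt s F D₁ D₂ x := by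
  classical
  have hE₂v : E₂.verts ⊆ D₁.verts :=
    hdX.verts_subset_of_avoid hdD.arcs₂_subset hdD.verts₂_subset
      (h₂.connected ⟨y, hdD.x_mem₂⟩) hxE₂ hdD.x_mem₂ hyD₁
  have hE₂a : E₂.arcs ⊆ D₁.arcs := hdX.arcs_subset_of_verts_subset hdD.arcs₂_subset hE₂v
  set P := inter E₁ D₁ with hP
  set Q := inter E₁ D₂ with hQ
  have hdE : Decomp E₁ P Q x := hdX.inter_decomp hdD.verts₁_subset hdD.arcs₁_subset hxE₁
  have hE₁c : E₁.Connected := h₁.connected ⟨x, hxE₁⟩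
  have hPc : P.Connected := hdX.inter_connected hdD.arcs₁_subset hE₁c hxE₁ hdX.x_mem₁
  have hQc : Q.Connected := hdX.symm.inter_connected hdD.arcs₁_subset hE₁c hxE₁ hdX.x_mem₂
  obtain ⟨Ga, Gb, hGa, hGb, hGaH, hGbH, hGsum⟩ := IH₁ P Q x hdE hPc hQc
  have hD₂Q : D₂ = Q := by
    refine ext' (Finset.Subset.antisymm ?_ ?_) (Finset.Subset.antisymm ?_ ?_)
    · intro v hv
      have hvD : v ∈ D.verts := hdX.verts₂_subset hv
      rw [hdD.hV, Finset.mem_union] at hvD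
      rcases hvD with hh | hh
      · exact Finset.mem_inter.mpr ⟨hh, hv⟩
      · have hvx : v = x := hdX.mem_both_iff.mp ⟨hE₂v hh, hv⟩
        subst hvx
        exact Finset.mem_inter.mpr ⟨hxE₁, hv⟩
    · intro v hv
      exact (Finset.mem_inter.mp hv).2
    · intro a ha
      have haD : a ∈ D.arcs := hdX.arcs₂_subset ha
      rw [hdD.hA, Finset.mem_union] at haD
      rcases haD with hh | hh
      · exact Finset.mem_inter.mpr ⟨hh, ha⟩
      · exact absurd (hE₂a hh) (fun t => hdX.arcs_disjoint t ha)
    · intro a ha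
      exact (Finset.mem_inter.mp ha).2
  have hyP : y ∈ P.verts := Finset.mem_inter.mpr ⟨hdD.x_mem₁, hyD₁⟩
  refine ⟨(fun k v => if v = y then ((Ga k y).1 + (H₂ k y).1, (Ga k y).2 + (H₂ k y).2)
      else if v ∈ E₂.verts then H₂ k v else Ga k v), Gb, ?_, ?_, ?_, ?_, ?_⟩
  · -- (D₁, G₁) is hard via a join at y
    refine IsHardPair.join P E₂ Ga H₂ y hGa h₂ ?_ ?_ ?_ ?_ ?_ (fun k => by simp)
    · ext w
      simp only [hP, inter_verts, Finset.mem_inter, Finset.mem_singleton]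
      constructor
      · rintro ⟨⟨hw1, _⟩, hw2⟩
        exact hdD.mem_both_iff.mp ⟨hw1, hw2⟩
      · rintro rfl
        exact ⟨⟨hdD.x_mem₁, hyD₁⟩, hdD.x_mem₂⟩
    · ext w
      simp only [hP, inter_verts, Finset.mem_union, Finset.mem_inter]
      constructor
      · intro hw
        have := hdX.verts₁_subset hw
        rw [hdD.hV, Finset.mem_union] at this
        rcases this with hh | hh
        · exact Or.inl ⟨hh, hw⟩
        · exact Or.inr hh
      · rintro (⟨_, hw⟩ | hw)
        · exact hw
        · exact hE₂v hw
    · ext a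
      simp only [hP, inter_arcs, Finset.mem_union, Finset.mem_inter]
      constructor
      · intro ha
        have := hdX.arcs₁_subset ha
        rw [hdD.hA, Finset.mem_union] at this
        rcases this with hh | hh
        · exact Or.inl ⟨hh, ha⟩
        · exact Or.inr hh
      · rintro (⟨_, ha⟩ | ha)
        · exact ha
        · exact hE₂a ha
    · intro k v hv hvy
      rw [if_neg hvy, if_neg]
      intro hvE₂
      exact hvy (hdD.mem_both_iff.mp ⟨(Finset.mem_inter.mp hv).1, hvE₂⟩)
    · intro k v hv hvy
      rw [if_neg hvy, if_pos hv]
  · exact hD₂Q ▸ hGb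
  · intro k v hv hvx
    dsimp only
    by_cases hvy : v = y
    · subst hvy
      rw [if_pos rfl, hFx k, hGaH k v hyP hvx]
    · rw [if_neg hvy]
      by_cases hvE₂ : v ∈ E₂.verts
      · rw [if_pos hvE₂]
        exact (hF₂ k v hvE₂ hvy).symm
      · rw [if_neg hvE₂]
        have hvE₁ : v ∈ E₁.verts := by
          have := hdX.verts₁_subset hv
          rw [hdD.hV, Finset.mem_union] at this
          exact this.resolve_right hvE₂
        rw [hGaH k v (Finset.mem_inter.mpr ⟨hvE₁, hv⟩) hvx]
        exact (hF₁ k v hvE₁ hvy).symm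
  · intro k v hv hvx
    have hvy : v ≠ y := by
      intro hh
      rw [hh] at hvx
      exact hvx (hdX.mem_both_iff.mp ⟨hyD₁, hh ▸ hv⟩)
    have hvQ : v ∈ Q.verts := hD₂Q ▸ hv
    rw [hGbH k v hvQ hvx]
    exact (hF₁ k v (Finset.mem_inter.mp hvQ).1 hvy).symm
  · intro k
    dsimp only
    rw [if_neg (Ne.symm hyx), if_neg hxE₂]
    rw [hF₁ k x hxE₁ (Ne.symm hyx), hGsum k]

end Digraph'
namespace Digraph'

variable {D D₁ D₂ : Digraph'} {s : ℕ} {F : Fin s → ℕ → ℕ × ℕ}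

lemma IsHardPair.splitAt (h : IsHardPair s D F) :
    ∀ (D₁ D₂ : Digraph') (x : ℕ), Decomp D D₁ D₂ x → D₁.Connected → D₂.Connected →
      SplitAt s F D₁ D₂ x := by
  induction h with
  | mono i hbi hi hk =>
      intro D₁ D₂ x hd hc₁ hc₂
      by_cases hs₁ : D₁.verts = {x}
      · exact splitAt_trivial (.mono i hbi hi hk) hd hs₁
      by_cases hs₂ : D₂.verts = {x}
      · exact (splitAt_trivial (.mono i hbi hi hk) hd.symm hs₂).symm
      obtain ⟨v₁, hv₁, h1x⟩ := hd.exists_ne hs₁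
      obtain ⟨v₂, hv₂, h2x⟩ := hd.symm.exists_ne hs₂
      exact absurd hbi (hd.not_biconnected hv₁ h1x hv₂ h2x)
  | bicycle i j hij hD hi hj hk =>
      intro D₁ D₂ x hd hc₁ hc₂
      by_cases hs₁ : D₁.verts = {x}
      · exact splitAt_trivial (.bicycle i j hij hD hi hj hk) hd hs₁
      by_cases hs₂ : D₂.verts = {x}
      · exact (splitAt_trivial (.bicycle i j hij hD hi hj hk) hd.symm hs₂).symm
      obtain ⟨v₁, hv₁, h1x⟩ := hd.exists_ne hs₁
      obtain ⟨v₂, hv₂, h2x⟩ := hd.symm.exists_ne hs₂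
      exact absurd hD.2.1 (fun hcyc => hd.not_cycleUG hc₁ hc₂
        (Finset.one_lt_card.mpr ⟨v₁, hv₁, x, hd.x_mem₁, h1x⟩)
        (Finset.one_lt_card.mpr ⟨v₂, hv₂, x, hd.x_mem₂, h2x⟩) hcyc)
  | complete hD hconst hsym hsum =>
      intro D₁ D₂ x hd hc₁ hc₂
      by_cases hs₁ : D₁.verts = {x}
      · exact splitAt_trivial (.complete hD hconst hsym hsum) hd hs₁
      by_cases hs₂ : D₂.verts = {x}
      · exact (splitAt_trivial (.complete hD hconst hsym hsum) hd.symm hs₂).symm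
      obtain ⟨v₁, hv₁, h1x⟩ := hd.exists_ne hs₁
      obtain ⟨v₂, hv₂, h2x⟩ := hd.symm.exists_ne hs₂
      exact (hd.not_bidirectedComplete hv₁ h1x hv₂ h2x hD).elim
  | join E₁ E₂ H₁ H₂ y h₁ h₂ hx hV hA hF₁ hF₂ hFx ih₁ ih₂ =>
      rename_i D0 F0
      intro D₁ D₂ x hd hc₁ hc₂
      have hdD : Decomp _ E₁ E₂ y := ⟨hx, hV, hA⟩
      have hh : IsHardPair s _ _ := IsHardPair.join E₁ E₂ H₁ H₂ y h₁ h₂ hx hV hA hF₁ hF₂ hFx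
      by_cases hs₁ : D₁.verts = {x}
      · exact splitAt_trivial hh hd hs₁
      by_cases hs₂ : D₂.verts = {x}
      · exact (splitAt_trivial hh hd.symm hs₂).symm
      by_cases hyx : y = x
      · -- the join vertex coincides with the splitting vertex: recombine four pieces
        subst hyx
        have hE₁c : E₁.Connected := h₁.connected ⟨y, hdD.x_mem₁⟩
        have hE₂c : E₂.Connected := h₂.connected ⟨y, hdD.x_mem₂⟩
        have hdE₁ : Decomp E₁ (inter E₁ D₁) (inter E₁ D₂) y :=
          hd.inter_decomp hdD.verts₁_subset hdD.arcs₁_subset hdD.x_mem₁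
        have hdE₂ : Decomp E₂ (inter E₂ D₁) (inter E₂ D₂) y :=
          hd.inter_decomp hdD.verts₂_subset hdD.arcs₂_subset hdD.x_mem₂
        obtain ⟨G₁a, G₁b, h₁a, h₁b, h₁aH, h₁bH, h₁sum⟩ := ih₁ _ _ y hdE₁
          (hd.inter_connected hdD.arcs₁_subset hE₁c hdD.x_mem₁ hd.x_mem₁)
          (hd.symm.inter_connected hdD.arcs₁_subset hE₁c hdD.x_mem₁ hd.x_mem₂)
        obtain ⟨G₂a, G₂b, h₂a, h₂b, h₂aH, h₂bH, h₂sum⟩ := ih₂ _ _ y hdE₂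
          (hd.inter_connected hdD.arcs₂_subset hE₂c hdD.x_mem₂ hd.x_mem₁)
          (hd.symm.inter_connected hdD.arcs₂_subset hE₂c hdD.x_mem₂ hd.x_mem₂)
        refine ⟨(fun k v => if v = y then
              ((G₁a k y).1 + (G₂a k y).1, (G₁a k y).2 + (G₂a k y).2)
            else if v ∈ E₁.verts then G₁a k v else G₂a k v),
          (fun k v => if v = y then
              ((G₁b k y).1 + (G₂b k y).1, (G₁b k y).2 + (G₂b k y).2)
            else if v ∈ E₁.verts then G₁b k v else G₂b k v), ?_, ?_, ?_, ?_, ?_⟩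
        · refine IsHardPair.join (inter E₁ D₁) (inter E₂ D₁) G₁a G₂a y h₁a h₂a
            ?_ ?_ ?_ ?_ ?_ (fun k => by simp)
          · ext w
            simp only [inter_verts, Finset.mem_inter, Finset.mem_singleton]
            constructor
            · rintro ⟨⟨hw1, _⟩, ⟨hw2, _⟩⟩
              exact hdD.mem_both_iff.mp ⟨hw1, hw2⟩
            · rintro rfl
              exact ⟨⟨hdD.x_mem₁, hd.x_mem₁⟩, ⟨hdD.x_mem₂, hd.x_mem₁⟩⟩
          · ext w
            simp only [inter_verts, Finset.mem_union, Finset.mem_inter]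
            constructor
            · intro hw
              have := hd.verts₁_subset hw
              rw [hdD.hV, Finset.mem_union] at this
              exact this.imp (fun t => ⟨t, hw⟩) (fun t => ⟨t, hw⟩)
            · rintro (⟨_, hw⟩ | ⟨_, hw⟩) <;> exact hw
          · ext a
            simp only [inter_arcs, Finset.mem_union, Finset.mem_inter]
            constructor
            · intro ha
              have := hd.arcs₁_subset ha
              rw [hdD.hA, Finset.mem_union] at this
              exact this.imp (fun t => ⟨t, ha⟩) (fun t => ⟨t, ha⟩)
            · rintro (⟨_, ha⟩ | ⟨_, ha⟩) <;> exact ha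
          · intro k v hv hvx
            rw [if_neg hvx, if_pos (Finset.mem_inter.mp hv).1]
          · intro k v hv hvx
            rw [if_neg hvx, if_neg]
            intro hvE₁
            exact hvx (hdD.mem_both_iff.mp ⟨hvE₁, (Finset.mem_inter.mp hv).1⟩)
        · refine IsHardPair.join (inter E₁ D₂) (inter E₂ D₂) G₁b G₂b y h₁b h₂b
            ?_ ?_ ?_ ?_ ?_ (fun k => by simp)
          · ext w
            simp only [inter_verts, Finset.mem_inter, Finset.mem_singleton]
            constructor
            · rintro ⟨⟨hw1, _⟩, ⟨hw2, _⟩⟩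
              exact hdD.mem_both_iff.mp ⟨hw1, hw2⟩
            · rintro rfl
              exact ⟨⟨hdD.x_mem₁, hd.x_mem₂⟩, ⟨hdD.x_mem₂, hd.x_mem₂⟩⟩
          · ext w
            simp only [inter_verts, Finset.mem_union, Finset.mem_inter]
            constructor
            · intro hw
              have := hd.verts₂_subset hw
              rw [hdD.hV, Finset.mem_union] at this
              exact this.imp (fun t => ⟨t, hw⟩) (fun t => ⟨t, hw⟩)
            · rintro (⟨_, hw⟩ | ⟨_, hw⟩) <;> exact hw
          · ext a
            simp only [inter_arcs, Finset.mem_union, Finset.mem_inter]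
            constructor
            · intro ha
              have := hd.arcs₂_subset ha
              rw [hdD.hA, Finset.mem_union] at this
              exact this.imp (fun t => ⟨t, ha⟩) (fun t => ⟨t, ha⟩)
            · rintro (⟨_, ha⟩ | ⟨_, ha⟩) <;> exact ha
          · intro k v hv hvx
            rw [if_neg hvx, if_pos (Finset.mem_inter.mp hv).1]
          · intro k v hv hvx
            rw [if_neg hvx, if_neg]
            intro hvE₁
            exact hvx (hdD.mem_both_iff.mp ⟨hvE₁, (Finset.mem_inter.mp hv).1⟩)
        · intro k v hv hvx
          dsimp only
          rw [if_neg hvx]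
          by_cases hvE₁ : v ∈ E₁.verts
          · rw [if_pos hvE₁, h₁aH k v (Finset.mem_inter.mpr ⟨hvE₁, hv⟩) hvx]
            exact (hF₁ k v hvE₁ hvx).symm
          · have hvE₂ : v ∈ E₂.verts := by
              have := hd.verts₁_subset hv
              rw [hdD.hV, Finset.mem_union] at this
              exact this.resolve_left hvE₁
            rw [if_neg hvE₁, h₂aH k v (Finset.mem_inter.mpr ⟨hvE₂, hv⟩) hvx]
            exact (hF₂ k v hvE₂ hvx).symm
        · intro k v hv hvx
          dsimp only
          rw [if_neg hvx]
          by_cases hvE₁ : v ∈ E₁.verts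
          · rw [if_pos hvE₁, h₁bH k v (Finset.mem_inter.mpr ⟨hvE₁, hv⟩) hvx]
            exact (hF₁ k v hvE₁ hvx).symm
          · have hvE₂ : v ∈ E₂.verts := by
              have := hd.verts₂_subset hv
              rw [hdD.hV, Finset.mem_union] at this
              exact this.resolve_left hvE₁
            rw [if_neg hvE₁, h₂bH k v (Finset.mem_inter.mpr ⟨hvE₂, hv⟩) hvx]
            exact (hF₂ k v hvE₂ hvx).symm
        · intro k
          dsimp only
          rw [if_pos rfl, if_pos rfl, hFx k, h₁sum k, h₂sum k]
          simp only [Prod.mk.injEq]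
          omega
      · -- the join vertex is distinct from the splitting vertex
        have hyD : y ∈ D₁.verts ∨ y ∈ D₂.verts := by
          have := hdD.verts₁_subset hdD.x_mem₁
          rw [hd.hV, Finset.mem_union] at this
          exact this
        have hxE : x ∈ E₁.verts ∨ x ∈ E₂.verts := by
          have := hd.verts₁_subset hd.x_mem₁
          rw [hdD.hV, Finset.mem_union] at this
          exact this
        have hFx' : ∀ k : Fin s, F0 k y = ((H₂ k y).1 + (H₁ k y).1, (H₂ k y).2 + (H₁ k y).2) :=
          fun k => by rw [hFx k, Nat.add_comm, Nat.add_comm (H₁ k y).2]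
        rcases hyD with hyD | hyD <;> rcases hxE with hxE | hxE
        · have hxE₂ : x ∉ E₂.verts := fun hh2 => hyx (hdD.mem_both_iff.mp ⟨hxE, hh2⟩).symm
          exact split_join_aux hdD h₁ h₂ hF₁ hF₂ hFx hd hyx hyD hxE hxE₂ ih₁
        · have hxE₁ : x ∉ E₁.verts := fun hh2 => hyx (hdD.mem_both_iff.mp ⟨hh2, hxE⟩).symm
          exact split_join_aux hdD.symm h₂ h₁ hF₂ hF₁ hFx' hd hyx hyD hxE hxE₁ ih₂
        · have hxE₂ : x ∉ E₂.verts := fun hh2 => hyx (hdD.mem_both_iff.mp ⟨hxE, hh2⟩).symm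
          exact (split_join_aux hdD h₁ h₂ hF₁ hF₂ hFx hd.symm hyx hyD hxE hxE₂ ih₁).symm
        · have hxE₁ : x ∉ E₁.verts := fun hh2 => hyx (hdD.mem_both_iff.mp ⟨hh2, hxE⟩).symm
          exact (split_join_aux hdD.symm h₂ h₁ hF₂ hF₁ hFx' hd.symm hyx hyD hxE hxE₁ ih₂).symm

end Digraph'
namespace Digraph'

variable {D H A B D₁ D₂ : Digraph'}

lemma chain'_rtg_of_imp {R S : ℕ → ℕ → Prop} :
    ∀ (M : List ℕ) (hM : M ≠ []), M.Chain' R →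
      (∀ p ∈ M, ∀ q ∈ M, R p q → S p q) →
      ∀ u ∈ M, Relation.ReflTransGen S u (M.getLast hM)
  | [], hM, _, _, _, hu => absurd rfl hM
  | [a], _, _, _, u, hu => by
      simp only [List.mem_singleton] at hu
      subst hu
      exact .refl
  | a :: b :: t, _, hc, himp, u, hu => by
      have hc' : (b :: t).Chain' R := hc.tail
      have himp' : ∀ p ∈ b :: t, ∀ q ∈ b :: t, R p q → S p q := by
        intro p hp q hq
        exact himp p (List.mem_cons_of_mem a hp) q (List.mem_cons_of_mem a hq)
      have hlast : (a :: b :: t).getLast (by simp) = (b :: t).getLast (by simp) :=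
        List.getLast_cons (by simp)
      rw [hlast]
      rcases List.mem_cons.mp hu with rfl | hu
      · have hab : R u b := (List.isChain_cons_cons.mp hc).1
        have hS : S u b := himp u (by simp) b (by simp) hab
        exact Relation.ReflTransGen.head hS
          (chain'_rtg_of_imp (b :: t) (by simp) hc' himp' b (by simp))
      · exact chain'_rtg_of_imp (b :: t) (by simp) hc' himp' u hu

lemma list_dup_split : ∀ {l : List ℕ}, ¬ l.Nodup →
    ∃ (a : ℕ) (l₁ l₂ l₃ : List ℕ), l = l₁ ++ a :: (l₂ ++ a :: l₃)
  | [], h => absurd List.nodup_nil h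
  | x :: t, h => by
      by_cases hx : x ∈ t
      · obtain ⟨s, t', rfl⟩ := List.append_of_mem hx
        exact ⟨x, [], s, t', by simp⟩
      · have ht : ¬ t.Nodup := by
          intro hn
          exact h (List.nodup_cons.mpr ⟨hx, hn⟩)
        obtain ⟨a, l₁, l₂, l₃, rfl⟩ := list_dup_split ht
        exact ⟨a, x :: l₁, l₂, l₃, by simp⟩

lemma Biconnected.two_le_card (h : D.Biconnected) : 2 ≤ D.verts.card := h.1

lemma connected_mono {K : Digraph'} (hv : H.verts = K.verts) (ha : H.arcs ⊆ K.arcs)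
    (h : H.Connected) : K.Connected := by
  refine ⟨hv ▸ h.1, fun u hu v hv' => ?_⟩
  exact rtg_mono (le_of_eq hv) ha (h.2 u (hv ▸ hu) v (hv ▸ hv'))

/-- a block contains every arc of `D` joining two of its vertices. -/
lemma IsBlock.arcs_induced (hB : IsBlock B D) {a : ℕ × ℕ} (ha : a ∈ D.arcs)
    (h1 : a.1 ∈ B.verts) (h2 : a.2 ∈ B.verts) : a ∈ B.arcs := by
  have hBv : B.verts ⊆ D.verts := hB.1.1
  set B' := D.induce B.verts with hB'
  have hverts : B'.verts = B.verts := by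
    rw [hB', induce_verts]
    exact Finset.inter_eq_right.mpr hBv
  have harcs : B.arcs ⊆ B'.arcs := by
    intro b hb
    rw [hB', mem_induce_arcs]
    exact ⟨hB.1.2 hb, B.mem_fst b hb, B.mem_snd b hb⟩
  have hbicon : B'.Biconnected := by
    refine ⟨?_, ?_, ?_⟩
    · rw [hverts]; exact hB.2.1.1
    · exact connected_mono hverts.symm harcs hB.2.1.2.1
    · intro y hy
      rw [hverts] at hy
      refine connected_mono (K := B'.del {y}) ?_ ?_ (hB.2.1.2.2 y hy)
      · simp only [del_verts, hverts]
      · intro b hb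
        rw [mem_del_arcs] at hb ⊢
        exact ⟨harcs hb.1, hb.2⟩
  have hsub : B'.IsSubdigraph D := by
    constructor
    · rw [hverts]; exact hBv
    · intro b hb
      rw [hB', mem_induce_arcs] at hb
      exact hb.1
  have heq := hB.2.2 B' hsub hbicon ⟨le_of_eq hverts.symm, harcs⟩
  rw [← heq, hB', mem_induce_arcs]
  exact ⟨ha, h1, h2⟩

end Digraph'
namespace Digraph'

variable {D B : Digraph'}

/-- specification of a `B`-ear-walk in `E` starting at `w`. -/
def EarSpec (E B : Digraph') (w : ℕ) (L : List ℕ) : Prop :=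
  L ≠ [] ∧ L.head? = some w ∧ L.Chain' E.ugAdj ∧
    (∀ u ∈ L.dropLast, u ∉ B.verts) ∧ (∀ u ∈ L, u ∈ E.verts) ∧
    (∀ z, L.getLast? = some z → z ∈ B.verts)

lemma earSpec_exists {E : Digraph'} {w b : ℕ}
    (hw : Relation.ReflTransGen E.ugAdj w b) (hwE : w ∈ E.verts) (hb : b ∈ B.verts)
    (hbE : b ∈ E.verts) : ∃ L, EarSpec E B w L := by
  classical
  have claim : ∀ u : ℕ, Relation.ReflTransGen E.ugAdj u b → u ∈ E.verts →
      ∃ L, EarSpec E B u L := by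
    intro u hu
    induction hu using Relation.ReflTransGen.head_induction_on with
    | refl =>
        intro _
        refine ⟨[b], by simp, by simp, List.isChain_singleton _, by simp, ?_, ?_⟩
        · intro p hp
          rw [List.mem_singleton] at hp
          subst hp
          exact hbE
        · intro z hz
          simp only [List.getLast?_singleton, Option.some.injEq] at hz
          subst hz
          exact hb
    | @head a c hadj htail ih =>
        intro _
        by_cases haB : a ∈ B.verts
        · refine ⟨[a], by simp, by simp, List.isChain_singleton _, by simp, ?_, ?_⟩
          · intro p hp
            rw [List.mem_singleton] at hp
            subst hp
            exact hadj.1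
          · intro z hz
            simp only [List.getLast?_singleton, Option.some.injEq] at hz
            subst hz
            exact haB
        · obtain ⟨L', h1, h2, h3, h4, h5, h6⟩ := ih hadj.2.1
          obtain ⟨c', t, rfl⟩ := List.exists_cons_of_ne_nil h1
          have hcc : c' = c := by
            simp only [List.head?_cons, Option.some.injEq] at h2
            exact h2
          subst hcc
          refine ⟨a :: c' :: t, by simp, by simp, ?_, ?_, ?_, ?_⟩
          · exact List.isChain_cons_cons.mpr ⟨hadj, h3⟩
          · rw [List.dropLast_cons_of_ne_nil (by simp)]
            intro p hp
            rcases List.mem_cons.mp hp with rfl | hp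
            · exact haB
            · exact h4 p hp
          · intro p hp
            rcases List.mem_cons.mp hp with rfl | hp
            · exact hadj.1
            · exact h5 p hp
          · intro z hz
            rw [List.getLast?_cons_cons] at hz
            exact h6 z hz
  exact claim w hw hwE

lemma earSpec_min_nodup {E : Digraph'} {w : ℕ} (hex : ∃ L, EarSpec E B w L) :
    ∃ L, EarSpec E B w L ∧ L.Nodup := by
  classical
  have hexn : ∃ n, ∃ L, EarSpec E B w L ∧ L.length = n := by
    obtain ⟨L, hL⟩ := hex
    exact ⟨L.length, L, hL, rfl⟩
  obtain ⟨L, hL, hlen⟩ := Nat.find_spec hexn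
  refine ⟨L, hL, ?_⟩
  by_contra hnd
  obtain ⟨a, l₁, l₂, l₃, rfl⟩ := list_dup_split hnd
  obtain ⟨hne, hhead, hchain, hdrop, hmem, hlast⟩ := hL
  -- the first occurrence of `a` is not the last element
  have hadrop : a ∈ (l₁ ++ a :: (l₂ ++ a :: l₃)).dropLast := by
    rw [show l₁ ++ a :: (l₂ ++ a :: l₃) = (l₁ ++ a :: l₂) ++ a :: l₃ by simp,
      List.dropLast_append_cons]
    exact List.mem_append_left _ (List.mem_append_right _ List.mem_cons_self)
  have haB : a ∉ B.verts := hdrop a hadrop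
  have hl₃ : l₃ ≠ [] := by
    intro hh
    subst hh
    have : (l₁ ++ a :: (l₂ ++ [a])).getLast? = some a := by
      rw [show l₁ ++ a :: (l₂ ++ [a]) = (l₁ ++ a :: l₂) ++ [a] by simp]
      exact List.getLast?_concat
    exact haB (hlast a this)
  -- the shortened walk
  have hspec' : EarSpec E B w (l₁ ++ a :: l₃) := by
    have hchain' : (l₁ ++ a :: l₃).Chain' E.ugAdj := by
      simp only [List.Chain'] at hchain ⊢
      rw [List.isChain_append]
      rw [show l₁ ++ a :: (l₂ ++ a :: l₃) = l₁ ++ ((a :: l₂) ++ a :: l₃) by simp,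
        List.isChain_append] at hchain
      obtain ⟨hc1, hc2, hc3⟩ := hchain
      rw [List.isChain_append] at hc2
      refine ⟨hc1, hc2.2.1, ?_⟩
      intro p hp q hq
      refine hc3 p hp q ?_
      simp only [List.head?_append_of_ne_nil _ (show (a :: l₂) ≠ [] by simp),
        List.head?_cons] at hq ⊢
      exact hq
    refine ⟨by simp, ?_, hchain', ?_, ?_, ?_⟩
    · rcases eq_or_ne l₁ [] with rfl | hl₁
      · simpa using hhead
      · rw [List.head?_append_of_ne_nil _ hl₁] at hhead ⊢
        exact hhead
    · rw [List.dropLast_append_cons]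
      intro u hu
      rcases List.mem_append.mp hu with hu | hu
      · refine hdrop u ?_
        rw [show l₁ ++ a :: (l₂ ++ a :: l₃) = (l₁ ++ a :: l₂) ++ a :: l₃ by simp,
          List.dropLast_append_cons]
        exact List.mem_append_left _ (List.mem_append_left _ hu)
      · rw [List.dropLast_cons_of_ne_nil hl₃] at hu
        rcases List.mem_cons.mp hu with rfl | hu
        · exact haB
        · refine hdrop u ?_
          rw [show l₁ ++ a :: (l₂ ++ a :: l₃) = (l₁ ++ a :: l₂ ++ [a]) ++ l₃ by simp,
            List.dropLast_append_of_ne_nil hl₃]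
          exact List.mem_append_right _ hu
    · intro u hu
      refine hmem u ?_
      rcases List.mem_append.mp hu with hu | hu
      · exact List.mem_append_left _ hu
      · rcases List.mem_cons.mp hu with rfl | hu
        · exact List.mem_append_right _ List.mem_cons_self
        · refine List.mem_append_right _ ?_
          exact List.mem_cons_of_mem _ (List.mem_append_right _ (List.mem_cons_of_mem _ hu))
    · intro z hz
      refine hlast z ?_
      rw [List.getLast?_append_of_ne_nil _ (show a :: l₃ ≠ [] by simp)] at hz
      rw [show l₁ ++ a :: (l₂ ++ a :: l₃) = (l₁ ++ a :: l₂) ++ a :: l₃ by simp,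
        List.getLast?_append_of_ne_nil _ (show a :: l₃ ≠ [] by simp)]
      exact hz
  have hlt : (l₁ ++ a :: l₃).length < Nat.find hexn := by
    rw [← hlen]
    simp only [List.length_append, List.length_cons]
    omega
  exact Nat.find_min hexn hlt ⟨l₁ ++ a :: l₃, hspec', rfl⟩

end Digraph'
namespace Digraph'

variable {D B : Digraph'}

lemma IsBlock.no_ear (hB : IsBlock B D) {v w : ℕ}
    (hv : v ∈ B.verts) (hw : w ∉ B.verts)
    (harc : (v, w) ∈ D.arcs ∨ (w, v) ∈ D.arcs)
    (hdel : (D.del {v}).Connected) : False := by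
  classical
  set E := D.del {v} with hE
  have hwD : w ∈ D.verts := by
    rcases harc with h | h
    · exact D.mem_snd _ h
    · exact D.mem_fst _ h
  have hwv : w ≠ v := fun hh => hw (hh ▸ hv)
  have hBD : B.verts ⊆ D.verts := hB.1.1
  have hcard := hB.2.1.1
  obtain ⟨b, hb, hbv⟩ := Finset.exists_mem_ne
    (show 1 < B.verts.card by omega) v
  have hwE : w ∈ E.verts := by
    rw [hE, del_verts, Finset.mem_sdiff, Finset.mem_singleton]
    exact ⟨hwD, hwv⟩
  have hbE : b ∈ E.verts := by
    rw [hE, del_verts, Finset.mem_sdiff, Finset.mem_singleton]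
    exact ⟨hBD hb, hbv⟩
  obtain ⟨L, hLs, hLnd⟩ := earSpec_min_nodup
    (earSpec_exists (B := B) (hdel.2 w hwE b hbE) hwE hb hbE)
  obtain ⟨hne, hhead, hchain, hdrop, hmem, hlast⟩ := hLs
  set z := L.getLast hne with hz
  have hzB : z ∈ B.verts := hlast z (List.getLast?_eq_getLast hne)
  have hLE : ∀ p ∈ L, p ∈ E.verts := hmem
  have hLv : ∀ p ∈ L, p ≠ v := by
    intro p hp hh
    have := hLE p hp
    rw [hE, del_verts, Finset.mem_sdiff, Finset.mem_singleton] at this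
    exact this.2 hh
  have hheadw : L.head hne = w := by
    have := List.head?_eq_head hne
    rw [hhead] at this
    exact (Option.some.injEq _ _ ▸ this).symm
  have hwL : w ∈ L := hheadw ▸ List.head_mem hne
  have hwz : w ≠ z := fun hh => hw (hh ▸ hzB)
  -- the augmented digraph
  set X := B.verts ∪ L.toFinset with hX
  have hXD : X ⊆ D.verts := by
    intro p hp
    rw [hX, Finset.mem_union, List.mem_toFinset] at hp
    rcases hp with hp | hp
    · exact hBD hp
    · have := hLE p hp
      rw [hE, del_verts, Finset.mem_sdiff] at this
      exact this.1
  set Hd := D.induce X with hHd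
  have hHverts : Hd.verts = X := by
    rw [hHd, induce_verts]
    exact Finset.inter_eq_right.mpr hXD
  have hmemX : ∀ p ∈ L, p ∈ X := by
    intro p hp
    rw [hX, Finset.mem_union, List.mem_toFinset]
    exact Or.inr hp
  have hBX : B.verts ⊆ X := by
    rw [hX]; exact Finset.subset_union_left
  have hBarcsH : B.arcs ⊆ Hd.arcs := by
    intro a ha
    rw [hHd, mem_induce_arcs]
    exact ⟨hB.1.2 ha, hBX (B.mem_fst a ha), hBX (B.mem_snd a ha)⟩
  have hHsubD : Hd.IsSubdigraph D := by
    constructor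
    · rw [hHverts]; exact hXD
    · intro a ha
      rw [hHd, mem_induce_arcs] at ha
      exact ha.1
  -- adjacency transfer into `Hd.del {y}`
  have hadjdel : ∀ (y p q : ℕ), p ∈ X → q ∈ X → p ≠ y → q ≠ y → E.ugAdj p q →
      (Hd.del {y}).ugAdj p q := by
    intro y p q hpX hqX hpy hqy ⟨hp, hq, hpq⟩
    rw [hE, del_verts, Finset.mem_sdiff] at hp hq
    refine ⟨?_, ?_, ?_⟩
    · rw [del_verts, hHverts, Finset.mem_sdiff, Finset.mem_singleton]
      exact ⟨hpX, hpy⟩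
    · rw [del_verts, hHverts, Finset.mem_sdiff, Finset.mem_singleton]
      exact ⟨hqX, hqy⟩
    · rcases hpq with hpq | hpq
      · rw [hE, mem_del_arcs] at hpq
        refine Or.inl ?_
        rw [mem_del_arcs, hHd, mem_induce_arcs]
        simp only [Finset.mem_singleton]
        exact ⟨⟨hpq.1, hpX, hqX⟩, hpy, hqy⟩
      · rw [hE, mem_del_arcs] at hpq
        refine Or.inr ?_
        rw [mem_del_arcs, hHd, mem_induce_arcs]
        simp only [Finset.mem_singleton]
        exact ⟨⟨hpq.1, hqX, hpX⟩, hqy, hpy⟩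
  -- B-walks transfer into `Hd.del {y}` for y outside B, and `B.del {y}` walks always
  have hBadjdel : ∀ (y p q : ℕ), y ∉ B.verts → B.ugAdj p q → (Hd.del {y}).ugAdj p q := by
    intro y p q hyB ⟨hp, hq, hpq⟩
    refine ⟨?_, ?_, ?_⟩
    · rw [del_verts, hHverts, Finset.mem_sdiff, Finset.mem_singleton]
      exact ⟨hBX hp, fun hh => hyB (hh ▸ hp)⟩
    · rw [del_verts, hHverts, Finset.mem_sdiff, Finset.mem_singleton]
      exact ⟨hBX hq, fun hh => hyB (hh ▸ hq)⟩
    · refine hpq.imp ?_ ?_ <;> intro ha <;>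
        rw [mem_del_arcs] <;> simp only [Finset.mem_singleton]
      · exact ⟨hBarcsH ha, fun hh => hyB (hh ▸ hp), fun hh => hyB (hh ▸ hq)⟩
      · exact ⟨hBarcsH ha, fun hh => hyB (hh ▸ hq), fun hh => hyB (hh ▸ hp)⟩
  have hBdel_mono : ∀ y : ℕ, ∀ p q : ℕ, (B.del {y}).ugAdj p q → (Hd.del {y}).ugAdj p q := by
    intro y p q ⟨hp, hq, hpq⟩
    rw [del_verts, Finset.mem_sdiff, Finset.mem_singleton] at hp hq
    refine ⟨?_, ?_, ?_⟩
    · rw [del_verts, hHverts, Finset.mem_sdiff, Finset.mem_singleton]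
      exact ⟨hBX hp.1, hp.2⟩
    · rw [del_verts, hHverts, Finset.mem_sdiff, Finset.mem_singleton]
      exact ⟨hBX hq.1, hq.2⟩
    · refine hpq.imp ?_ ?_ <;> intro ha <;> rw [mem_del_arcs] at ha ⊢ <;>
        exact ⟨hBarcsH ha.1, ha.2⟩
  -- walks along sublists of L inside `Hd.del {y}`
  have hwalk : ∀ (y : ℕ) (M : List ℕ), M.Chain' E.ugAdj → (∀ p ∈ M, p ∈ L) →
      (∀ p ∈ M, p ≠ y) → ∀ (hM : M ≠ []), ∀ u ∈ M,
      Relation.ReflTransGen (Hd.del {y}).ugAdj u (M.getLast hM) := by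
    intro y M hc hmL hmy hM u hu
    refine chain'_rtg_of_imp M hM hc ?_ u hu
    intro p hp q hq hpq
    exact hadjdel y p q (hmemX p (hmL p hp)) (hmemX q (hmL q hq)) (hmy p hp) (hmy q hq) hpq
  -- the arc between v and w inside `Hd.del {y}` for y ∉ {v, w}
  have hvwadj : ∀ y : ℕ, y ≠ v → y ≠ w → (Hd.del {y}).ugAdj v w := by
    intro y hyv hyw
    refine ⟨?_, ?_, ?_⟩
    · rw [del_verts, hHverts, Finset.mem_sdiff, Finset.mem_singleton]
      exact ⟨hBX hv, fun hh => hyv hh.symm⟩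
    · rw [del_verts, hHverts, Finset.mem_sdiff, Finset.mem_singleton]
      exact ⟨hmemX w hwL, fun hh => hyw hh.symm⟩
    · refine harc.imp ?_ ?_ <;> intro ha <;> rw [mem_del_arcs, hHd, mem_induce_arcs] <;>
        simp only [Finset.mem_singleton]
      · exact ⟨⟨ha, hBX hv, hmemX w hwL⟩, fun hh => hyv hh.symm, fun hh => hyw hh.symm⟩
      · exact ⟨⟨ha, hmemX w hwL, hBX hv⟩, fun hh => hyw hh.symm, fun hh => hyv hh.symm⟩
  -- `Hd` is biconnected
  have hadj0 : ∀ p q : ℕ, p ∈ X → q ∈ X → E.ugAdj p q → Hd.ugAdj p q := by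
    intro p q hpX hqX ⟨hp, hq, hpq⟩
    refine ⟨hHverts ▸ hpX, hHverts ▸ hqX, hpq.imp ?_ ?_⟩ <;> intro h <;>
      rw [hE, mem_del_arcs] at h <;> rw [hHd, mem_induce_arcs]
    · exact ⟨h.1, hpX, hqX⟩
    · exact ⟨h.1, hqX, hpX⟩
  have hbicon : Hd.Biconnected := by
    refine ⟨le_trans hcard (Finset.card_le_card (hHverts ▸ hBX)), ?_, ?_⟩
    · refine connected_of_hub (x := z) (hHverts ▸ hBX hzB) ?_
      intro p hp
      rw [hHverts, hX, Finset.mem_union, List.mem_toFinset] at hp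
      rcases hp with hp | hp
      · refine rtg_mono (hHverts ▸ hBX) hBarcsH (hB.2.1.2.1.2 p hp z hzB)
      · exact chain'_rtg_of_imp L hne hchain
          (fun a ha c hc hac => hadj0 a c (hmemX a ha) (hmemX c hc) hac) p hp
    · intro y hy
      rw [hHverts] at hy
      by_cases hyB : y ∈ B.verts
      · have hBdel : (B.del {y}).Connected := hB.2.1.2.2 y hyB
        obtain ⟨p₀, hp₀, hp₀y⟩ := Finset.exists_mem_ne
          (show 1 < B.verts.card by omega) y
        have hubB : ∀ q ∈ B.verts, q ≠ y → Relation.ReflTransGen (Hd.del {y}).ugAdj q p₀ := by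
          intro q hq hqy
          refine Relation.ReflTransGen.mono (fun a c hac => hBdel_mono y a c hac) _ _ ?_
          refine hBdel.2 q ?_ p₀ ?_ <;>
            rw [del_verts, Finset.mem_sdiff, Finset.mem_singleton]
          · exact ⟨hq, hqy⟩
          · exact ⟨hp₀, hp₀y⟩
        refine connected_of_hub (x := p₀) ?_ ?_
        · rw [del_verts, hHverts, Finset.mem_sdiff, Finset.mem_singleton]
          exact ⟨hBX hp₀, hp₀y⟩
        · intro u hu
          rw [del_verts, hHverts, Finset.mem_sdiff, Finset.mem_singleton] at hu
          obtain ⟨huX, huy⟩ := hu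
          rw [hX, Finset.mem_union, List.mem_toFinset] at huX
          rcases huX with huB | huL
          · exact hubB u huB huy
          · by_cases hyz : y = z
            · have huz : u ≠ z := hyz ▸ huy
              set M := L.dropLast with hM
              have hL_eq : M ++ [z] = L := List.dropLast_append_getLast hne
              have hMne : M ≠ [] := by
                intro hh
                rw [hh, List.nil_append] at hL_eq
                rw [← hL_eq] at hwL
                rw [List.mem_singleton] at hwL
                exact hwz hwL
              have hchainM : M.Chain' E.ugAdj := by
                simp only [List.Chain'] at hchain
                rw [← hL_eq, List.isChain_append] at hchain
                exact hchain.1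
              have hmemM : ∀ p ∈ M, p ∈ L := fun p hp => List.dropLast_subset L hp
              have hmyM : ∀ p ∈ M, p ≠ y := by
                intro p hp hh
                exact hdrop p hp (by rw [hh, hyz]; exact hzB)
              have huM : u ∈ M := by
                have h0 := huL
                rw [← hL_eq, List.mem_append, List.mem_singleton] at h0
                exact h0.resolve_right huz
              have hwM : w ∈ M := by
                have h0 := hwL
                rw [← hL_eq, List.mem_append, List.mem_singleton] at h0
                exact h0.resolve_right hwz
              have g1 := hwalk y M hchainM hmemM hmyM hMne u huM
              have g2 := hwalk y M hchainM hmemM hmyM hMne w hwM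
              have hzv : z ≠ v := hLv z (List.getLast_mem hne)
              have hadjvw : (Hd.del {y}).ugAdj v w :=
                hvwadj y (fun hh => hzv (hyz.symm.trans hh)) (fun hh => hwz (hh.symm.trans hyz))
              have hvy : v ≠ y := fun hh => hzv (hh.trans hyz).symm
              exact ((g1.trans (rtg_symm g2)).trans
                (.single (ugAdj_symm hadjvw))).trans (hubB v hv hvy)
            · have hmyL : ∀ p ∈ L, p ≠ y := by
                intro p hp hh
                subst hh
                have h0 := hp
                rw [← List.dropLast_append_getLast hne, List.mem_append,
                  List.mem_singleton] at h0
                rcases h0 with h0 | h0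
                · exact hdrop p h0 hyB
                · exact hyz h0
              have g := hwalk y L hchain (fun p hp => hp) hmyL hne u huL
              exact g.trans (hubB z hzB (fun hh => hyz hh.symm))
      · have hyL : y ∈ L := by
          rw [hX, Finset.mem_union, List.mem_toFinset] at hy
          exact hy.resolve_left hyB
        obtain ⟨l₁, l₂, hsplit⟩ := List.append_of_mem hyL
        have hnd' := hLnd
        rw [hsplit, List.nodup_append] at hnd'
        have hyl₁ : y ∉ l₁ := fun hh => hnd'.2.2 y hh y List.mem_cons_self rfl
        have hyl₂ : y ∉ l₂ := by
          have h0 := hnd'.2.1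
          rw [List.nodup_cons] at h0
          exact h0.1
        have hvy : v ≠ y := fun hh => hyB (hh ▸ hv)
        refine connected_of_hub (x := v) ?_ ?_
        · rw [del_verts, hHverts, Finset.mem_sdiff, Finset.mem_singleton]
          exact ⟨hBX hv, hvy⟩
        · intro u hu
          rw [del_verts, hHverts, Finset.mem_sdiff, Finset.mem_singleton] at hu
          obtain ⟨huX, huy⟩ := hu
          have hubB' : ∀ q ∈ B.verts, Relation.ReflTransGen (Hd.del {y}).ugAdj q v := by
            intro q hq
            exact Relation.ReflTransGen.mono (fun a c hac => hBadjdel y a c hyB hac) _ _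
              (hB.2.1.2.1.2 q hq v hv)
          rw [hX, Finset.mem_union, List.mem_toFinset] at huX
          rcases huX with huB | huL
          · exact hubB' u huB
          · have hul : u ∈ l₁ ∨ u ∈ l₂ := by
              rw [hsplit, List.mem_append, List.mem_cons] at huL
              rcases huL with h0 | h0 | h0
              · exact Or.inl h0
              · exact absurd h0 huy
              · exact Or.inr h0
            rcases hul with hu1 | hu2
            · have hl₁ne : l₁ ≠ [] := List.ne_nil_of_mem hu1
              have hchain₁ : l₁.Chain' E.ugAdj := by
                simp only [List.Chain'] at hchain
                rw [hsplit, List.isChain_append] at hchain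
                exact hchain.1
              have hmem₁ : ∀ p ∈ l₁, p ∈ L := by
                intro p hp
                rw [hsplit]
                exact List.mem_append_left _ hp
              have hmy₁ : ∀ p ∈ l₁, p ≠ y := fun p hp hh => hyl₁ (hh ▸ hp)
              have hw₁ : w ∈ l₁ := by
                have hhd : l₁.head hl₁ne = w := by
                  have h0 : L.head? = some (l₁.head hl₁ne) := by
                    rw [hsplit, List.head?_append_of_ne_nil _ hl₁ne, List.head?_eq_head]
                  rw [hhead] at h0
                  exact (Option.some.injEq _ _ ▸ h0).symm
                exact hhd ▸ List.head_mem hl₁ne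
              have g1 := hwalk y l₁ hchain₁ hmem₁ hmy₁ hl₁ne u hu1
              have g2 := hwalk y l₁ hchain₁ hmem₁ hmy₁ hl₁ne w hw₁
              have hadjvw : (Hd.del {y}).ugAdj v w :=
                hvwadj y (fun hh => hLv y hyL hh)
                  (fun hh => hyl₁ (hh ▸ hw₁))
              exact (g1.trans (rtg_symm g2)).trans (.single (ugAdj_symm hadjvw))
            · have hl₂ne : l₂ ≠ [] := by
                intro hh
                rw [hh] at hsplit
                have h0 : L.getLast? = some y := by
                  rw [hsplit]
                  exact List.getLast?_concat
                rw [List.getLast?_eq_getLast hne] at h0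
                have : z = y := by
                  have := Option.some.injEq (L.getLast hne) y ▸ h0
                  exact this
                exact hyB (this ▸ hzB)
              have hchain₂ : l₂.Chain' E.ugAdj := by
                simp only [List.Chain'] at hchain
                rw [hsplit, List.isChain_append] at hchain
                exact (List.isChain_cons.mp hchain.2.1).2
              have hmem₂ : ∀ p ∈ l₂, p ∈ L := by
                intro p hp
                rw [hsplit]
                exact List.mem_append_right _ (List.mem_cons_of_mem _ hp)
              have hmy₂ : ∀ p ∈ l₂, p ≠ y := fun p hp hh => hyl₂ (hh ▸ hp)
              have hlast₂ : l₂.getLast hl₂ne = z := by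
                have h0 : L.getLast? = some (l₂.getLast hl₂ne) := by
                  rw [hsplit, show y :: l₂ = [y] ++ l₂ by simp,
                    ← List.append_assoc, List.getLast?_append_of_ne_nil _ hl₂ne,
                    List.getLast?_eq_getLast]
                rw [List.getLast?_eq_getLast hne] at h0
                exact (Option.some.injEq _ _ ▸ h0).symm
              have g := hwalk y l₂ hchain₂ hmem₂ hmy₂ hl₂ne u hu2
              rw [hlast₂] at g
              exact g.trans (hubB' z hzB)
  have heq := hB.2.2 Hd hHsubD hbicon ⟨hBX.trans (le_of_eq hHverts.symm), hBarcsH⟩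
  have : w ∈ B.verts := by
    rw [← heq, hHverts]
    exact hmemX w hwL
  exact hw this

end Digraph'
namespace Digraph'

variable {D B : Digraph'} {x : ℕ}

lemma IsEndBlockAt.not_cut_del_connected (hend : IsEndBlockAt B D x) {v : ℕ}
    (hv : v ∈ B.verts) (hvx : v ≠ x) : (D.del {v}).Connected := by
  have hBD : B.verts ⊆ D.verts := hend.1.1.1
  have hnc : ¬ D.CutVertex v := fun hc => hvx (hend.2.2.2 v hv hc)
  have hxD : x ∈ D.verts := hend.2.2.1.1
  have hdelne : (D.del {v}).verts.Nonempty := by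
    refine ⟨x, ?_⟩
    rw [del_verts, Finset.mem_sdiff, Finset.mem_singleton]
    exact ⟨hxD, Ne.symm hvx⟩
  by_contra hcon
  exact hnc ⟨hBD hv, hdelne, hcon⟩

lemma IsEndBlockAt.arc_local_fst (hend : IsEndBlockAt B D x) {a : ℕ × ℕ}
    (ha : a ∈ D.arcs) (h1 : a.1 ∈ B.verts) (h1x : a.1 ≠ x) : a ∈ B.arcs := by
  have h2 : a.2 ∈ B.verts := by
    by_contra h2
    refine hend.1.no_ear h1 h2 (Or.inl ?_) (hend.not_cut_del_connected h1 h1x)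
    rw [show (a.1, a.2) = a from rfl]
    exact ha
  exact hend.1.arcs_induced ha h1 h2

lemma IsEndBlockAt.arc_local_snd (hend : IsEndBlockAt B D x) {a : ℕ × ℕ}
    (ha : a ∈ D.arcs) (h2 : a.2 ∈ B.verts) (h2x : a.2 ≠ x) : a ∈ B.arcs := by
  have h1 : a.1 ∈ B.verts := by
    by_contra h1
    refine hend.1.no_ear h2 h1 (Or.inr ?_) (hend.not_cut_del_connected h2 h2x)
    rw [show (a.1, a.2) = a from rfl]
    exact ha
  exact hend.1.arcs_induced ha h1 h2

lemma IsEndBlockAt.decomp (hend : IsEndBlockAt B D x) :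
    Decomp D B (D.del (B.verts \ {x})) x := by
  have hBD : B.verts ⊆ D.verts := hend.1.1.1
  have hxB : x ∈ B.verts := hend.2.1
  have hxD : x ∈ D.verts := hBD hxB
  refine ⟨?_, ?_, ?_⟩
  · ext p
    simp only [del_verts, Finset.mem_inter, Finset.mem_sdiff, Finset.mem_singleton]
    constructor
    · rintro ⟨hp, -, hp2⟩
      by_contra hpx
      exact hp2 ⟨hp, hpx⟩
    · rintro rfl
      exact ⟨hxB, hxD, fun hh => hh.2 rfl⟩
  · ext p
    simp only [del_verts, Finset.mem_union, Finset.mem_sdiff, Finset.mem_singleton]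
    constructor
    · intro hp
      by_cases hpB : p ∈ B.verts
      · exact Or.inl hpB
      · exact Or.inr ⟨hp, fun hh => hpB hh.1⟩
    · rintro (hp | ⟨hp, -⟩)
      · exact hBD hp
      · exact hp
  · ext a
    simp only [Finset.mem_union, mem_del_arcs, Finset.mem_sdiff, Finset.mem_singleton]
    constructor
    · intro ha
      by_cases h1 : a.1 ∈ B.verts ∧ a.1 ≠ x
      · exact Or.inl (hend.arc_local_fst ha h1.1 h1.2)
      · by_cases h2 : a.2 ∈ B.verts ∧ a.2 ≠ x
        · exact Or.inl (hend.arc_local_snd ha h2.1 h2.2)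
        · exact Or.inr ⟨ha, h1, h2⟩
    · rintro (ha | ⟨ha, -, -⟩)
      · exact hend.1.1.2 ha
      · exact ha

lemma IsEndBlockAt.del_connected (hend : IsEndBlockAt B D x) (hDc : D.Connected) :
    (D.del (B.verts \ {x})).Connected := by
  have hBD : B.verts ⊆ D.verts := hend.1.1.1
  have hxB : x ∈ B.verts := hend.2.1
  have hxD : x ∈ D.verts := hBD hxB
  have hxD' : x ∈ (D.del (B.verts \ {x})).verts := by
    rw [del_verts, Finset.mem_sdiff, Finset.mem_sdiff, Finset.mem_singleton]
    exact ⟨hxD, fun hh => hh.2 rfl⟩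
  have claim : ∀ p : ℕ, Relation.ReflTransGen D.ugAdj p x →
      p ∉ B.verts \ {x} → Relation.ReflTransGen (D.del (B.verts \ {x})).ugAdj p x := by
    intro p hp
    induction hp using Relation.ReflTransGen.head_induction_on with
    | refl => exact fun _ => .refl
    | @head a c hadj htail ih =>
        intro haS
        by_cases hax : a = x
        · subst hax
          exact .refl
        by_cases hcS : c ∈ B.verts \ {x}
        · exfalso
          rw [Finset.mem_sdiff, Finset.mem_singleton] at hcS
          refine haS ?_
          rw [Finset.mem_sdiff, Finset.mem_singleton]
          refine ⟨?_, hax⟩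
          rcases hadj.2.2 with harc | harc
          · exact B.mem_fst _ (hend.arc_local_snd harc hcS.1 hcS.2)
          · exact B.mem_snd _ (hend.arc_local_fst harc hcS.1 hcS.2)
        · refine Relation.ReflTransGen.head ?_ (ih hcS)
          refine ⟨?_, ?_, ?_⟩
          · rw [del_verts, Finset.mem_sdiff]
            exact ⟨hadj.1, haS⟩
          · rw [del_verts, Finset.mem_sdiff]
            exact ⟨hadj.2.1, hcS⟩
          · refine hadj.2.2.imp ?_ ?_ <;> intro harc <;> rw [mem_del_arcs]
            · exact ⟨harc, haS, hcS⟩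
            · exact ⟨harc, hcS, haS⟩
  refine connected_of_hub hxD' ?_
  intro u hu
  rw [del_verts, Finset.mem_sdiff] at hu
  exact claim u (hDc.2 u hu.1 x hxD) hu.2

end Digraph'
namespace Digraph'

variable {D B : Digraph'} {x : ℕ}

lemma bidirectedComplete_outDeg (hD : D.BidirectedComplete) {v : ℕ} (hv : v ∈ D.verts) :
    D.outDeg v = D.verts.card - 1 := by
  classical
  have himg : D.arcs.filter (fun a => a.1 = v) = (D.verts.erase v).image (fun w => (v, w)) := by
    ext a
    simp only [Finset.mem_filter, Finset.mem_image, Finset.mem_erase]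
    constructor
    · rintro ⟨ha, h1⟩
      refine ⟨a.2, ⟨?_, D.mem_snd a ha⟩, ?_⟩
      · intro hh
        exact D.no_loops a ha (h1.trans hh.symm)
      · rw [← h1]
    · rintro ⟨w, ⟨hwv, hwD⟩, rfl⟩
      exact ⟨hD v hv w hwD (Ne.symm hwv), rfl⟩
  rw [outDeg, himg, Finset.card_image_of_injective _ (fun a b hab => by
    simpa using congrArg Prod.snd hab), Finset.card_erase_of_mem hv]

lemma bidirectedComplete_inDeg (hD : D.BidirectedComplete) {v : ℕ} (hv : v ∈ D.verts) :
    D.inDeg v = D.verts.card - 1 := by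
  classical
  have himg : D.arcs.filter (fun a => a.2 = v) = (D.verts.erase v).image (fun w => (w, v)) := by
    ext a
    simp only [Finset.mem_filter, Finset.mem_image, Finset.mem_erase]
    constructor
    · rintro ⟨ha, h1⟩
      refine ⟨a.1, ⟨?_, D.mem_fst a ha⟩, ?_⟩
      · intro hh
        exact D.no_loops a ha (hh.trans h1.symm)
      · rw [← h1]
    · rintro ⟨w, ⟨hwv, hwD⟩, rfl⟩
      exact ⟨hD w hwD v hv hwv, rfl⟩
  rw [inDeg, himg, Finset.card_image_of_injective _ (fun a b hab => by
    simpa using congrArg Prod.fst hab), Finset.card_erase_of_mem hv]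

lemma bidirected_inNbrs_eq (hb : D.Bidirected) (v : ℕ) : D.inNbrs v = D.ugNbrs v := by
  ext w
  simp only [mem_inNbrs, mem_ugNbrs]
  constructor
  · exact Or.inl
  · rintro (h | h)
    · exact h
    · exact hb _ h
lemma bidirected_outNbrs_eq (hb : D.Bidirected) (v : ℕ) : D.outNbrs v = D.ugNbrs v := by
  ext w
  simp only [mem_outNbrs, mem_ugNbrs]
  constructor
  · exact Or.inr
  · rintro (h | h)
    · exact hb _ h
    · exact h

lemma bidirected_cycle_deg (hb : D.Bidirected) {v : ℕ}
    (h2 : (D.ugNbrs v).card = 2) : D.inDeg v = 2 ∧ D.outDeg v = 2 := by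
  rw [inDeg_eq_card_inNbrs, outDeg_eq_card_outNbrs, bidirected_inNbrs_eq hb,
    bidirected_outNbrs_eq hb, h2]
  exact ⟨rfl, rfl⟩

lemma pos_deg_of_connected (hc : D.Connected) (hcard : 2 ≤ D.verts.card) {v : ℕ}
    (hv : v ∈ D.verts) : 0 < D.inDeg v + D.outDeg v := by
  obtain ⟨w, hw⟩ := exists_nbr_of_connected hc hv hcard
  rw [mem_ugNbrs] at hw
  rcases hw with hw | hw
  · have : 0 < D.inDeg v := Finset.card_pos.mpr ⟨(w, v), by
      rw [Finset.mem_filter]; exact ⟨hw, rfl⟩⟩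
    omega
  · have : 0 < D.outDeg v := Finset.card_pos.mpr ⟨(v, w), by
      rw [Finset.mem_filter]; exact ⟨hw, rfl⟩⟩
    omega

lemma IsEndBlockAt.deg_local (hend : IsEndBlockAt B D x) {u : ℕ} (hu : u ∈ B.verts)
    (hux : u ≠ x) : D.inDeg u = B.inDeg u ∧ D.outDeg u = B.outDeg u := by
  constructor
  · unfold inDeg
    congr 1
    ext a
    simp only [Finset.mem_filter]
    constructor
    · rintro ⟨ha, h1⟩
      exact ⟨hend.arc_local_snd ha (h1 ▸ hu) (h1 ▸ hux), h1⟩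
    · rintro ⟨ha, h1⟩
      exact ⟨hend.1.1.2 ha, h1⟩
  · unfold outDeg
    congr 1
    ext a
    simp only [Finset.mem_filter]
    constructor
    · rintro ⟨ha, h1⟩
      exact ⟨hend.arc_local_fst ha (h1 ▸ hu) (h1 ▸ hux), h1⟩
    · rintro ⟨ha, h1⟩
      exact ⟨hend.1.1.2 ha, h1⟩

end Digraph'

open Digraph'

/-- **Lemma (contraction preserves hardness).** Let `(D,F)` be a tight valid pair with `D` not
biconnected, `B` a hard end-block of `D` with cut-vertex `x`, and `(D',F')` the contraction of
`(D,F)` with respect to `B`. Then `(D,F)` is a hard pair iff `(D',F')` is a hard pair. -/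
theorem contraction_hard_iff
    (D : Digraph') (s : ℕ) (F : Fin s → ℕ → ℕ × ℕ)
    (hvalid : D.ValidPair s F) (htight : D.Tight s F)
    (hnotbi : ¬ D.Biconnected)
    (B : Digraph') (x : ℕ) (hend : IsEndBlockAt B D x)
    (hhard : HardEndBlock F B x)
    (u : ℕ) (hu : u ∈ B.verts) (hux : u ≠ x)
    (D' : Digraph') (F' : Fin s → ℕ → ℕ × ℕ)
    (hcontr : D.IsContraction F B x u D' F') :
    IsHardPair s D F ↔ IsHardPair s D' F' := by
  classical
  obtain ⟨hD'eq, hF'v, hbranch⟩ := hcontr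
  subst hD'eq
  have hBbi : B.Biconnected := hend.1.2.1
  have hBD : B.verts ⊆ D.verts := hend.1.1.1
  have hxB : x ∈ B.verts := hend.2.1
  have hxD : x ∈ D.verts := hBD hxB
  have hDc : D.Connected := hvalid.1
  have hdec : Decomp D B (D.del (B.verts \ {x})) x := hend.decomp
  have hD'c := hend.del_connected hDc
  have hBc : B.Connected := hBbi.2.1
  have hcardB : 2 ≤ B.verts.card := hBbi.1
  have huD : u ∈ D.verts := hBD hu
  have hdegu := hend.deg_local hu hux
  constructor
  · -- forward direction
    intro hhp
    obtain ⟨G₁, G₂, hG₁, hG₂, hG₁F, hG₂F, hGsum⟩ := hhp.splitAt B _ x hdec hBc hD'c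
    have hcls := hG₁.classify hBbi
    refine hG₂.congr ?_
    intro k v hv
    by_cases hvx : v = x
    case neg => exact (hG₂F k v hv hvx).trans (hF'v k v hv hvx).symm
    subst v
    rcases hbranch with ⟨c, hmono, hF'c, hF'k⟩ | ⟨hnm, hF'u⟩
    · -- mono contraction branch
      have hcx : G₁ c x = (B.inDeg x, B.outDeg x) ∧ ∀ k', k' ≠ c → G₁ k' x = (0, 0) := by
        have hposu : 0 < B.inDeg u + B.outDeg u := pos_deg_of_connected hBc hcardB hu
        rcases hcls with ⟨i, hi, hk⟩ | ⟨i, j, hij, hcyc, hi, hj, hk⟩ |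
          ⟨hcomp, hconst, hsym, hsum⟩
        · obtain rfl : i = c := by
            by_contra hic
            have h1 : F i u = (0, 0) := (hmono.2.2 u hu hux).2 i hic
            have h2 : G₁ i u = F i u := hG₁F i u hu hux
            have h3 := hi u hu
            rw [h2, h1] at h3
            have h4 := congrArg Prod.fst h3
            have h5 := congrArg Prod.snd h3
            simp only [Prod.fst, Prod.snd] at h4 h5
            omega
          exact ⟨hi x hxB, fun k' hk' => hk k' hk' x hxB⟩
        · exfalso
          have h1 : G₁ i u = F i u := hG₁F i u hu hux
          have h2 : G₁ j u = F j u := hG₁F j u hu hux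
          have h3 := hi u hu
          have h4 := hj u hu
          rw [h1] at h3
          rw [h2] at h4
          have hic : i = c := by
            by_contra hic
            rw [(hmono.2.2 u hu hux).2 i hic] at h3
            exact absurd (congrArg Prod.fst h3) (by simp)
          have hjc : j = c := by
            by_contra hjc
            rw [(hmono.2.2 u hu hux).2 j hjc] at h4
            exact absurd (congrArg Prod.fst h4) (by simp)
          exact hij (hic.trans hjc.symm)
        · have hd1 : B.inDeg u = B.inDeg x := by
            rw [bidirectedComplete_inDeg hcomp hu, bidirectedComplete_inDeg hcomp hxB]
          have hd2 : B.outDeg u = B.outDeg x := by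
            rw [bidirectedComplete_outDeg hcomp hu, bidirectedComplete_outDeg hcomp hxB]
          constructor
          · rw [hconst c x hxB u hu, hG₁F c u hu hux, (hmono.2.2 u hu hux).1, hd1, hd2]
          · intro k' hk'
            rw [hconst k' x hxB u hu, hG₁F k' u hu hux, (hmono.2.2 u hu hux).2 k' hk']
      by_cases hkc : k = c
      · subst hkc
        rw [hF'c]
        have hsum := hGsum k
        rw [hcx.1] at hsum
        have h1 := congrArg Prod.fst hsum
        have h2 := congrArg Prod.snd hsum
        simp only [Prod.fst, Prod.snd] at h1 h2
        refine Prod.ext ?_ ?_ <;> simp only [Prod.fst, Prod.snd] <;> omega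
      · rw [hF'k k hkc]
        have hsum := hGsum k
        rw [hcx.2 k hkc] at hsum
        rw [hsum]
        refine Prod.ext ?_ ?_ <;> simp
    · -- non-mono contraction branch
      have hkey : ∀ k', G₁ k' x = F k' u := by
        have hG1u : ∀ k', G₁ k' u = F k' u := fun k' => hG₁F k' u hu hux
        rcases hhard with ⟨c, hm⟩ | ⟨hcyc, i, j, hij, hi1, hi2, hj1, hj2, hvals⟩ |
          ⟨hBcomp, hconstF, hsymF, hdomF⟩
        · exact absurd ⟨c, hm⟩ hnm
        · rcases hcls with ⟨i', hi', hk'⟩ | ⟨i', j', hij', hcyc', hi', hj', hk'⟩ |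
            ⟨hcomp', hconst', hsym', hsum'⟩
          · exfalso
            have hdeg2 := bidirected_cycle_deg hcyc.1 (hcyc.2.1.2 u hu)
            have h3 := hi' u hu
            rw [hG1u i'] at h3
            obtain ⟨hFi, hFj, hFo⟩ := hvals u hu hux
            have hval : F i' u = (1, 1) ∨ F i' u = (0, 0) := by
              by_cases h1 : i' = i
              · exact Or.inl (h1 ▸ hFi)
              · by_cases h2 : i' = j
                · exact Or.inl (h2 ▸ hFj)
                · exact Or.inr (hFo i' h1 h2)
            rcases hval with hval | hval <;> rw [hval] at h3 <;>
              · have h4 := congrArg Prod.fst h3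
                simp only [Prod.fst] at h4
                omega
          · intro k'
            by_cases h1 : k' = i'
            · subst h1
              rw [hi' x hxB, ← hG1u k', hi' u hu]
            · by_cases h2 : k' = j'
              · subst h2
                rw [hj' x hxB, ← hG1u k', hj' u hu]
              · rw [hk' k' h1 h2 x hxB, ← hG1u k', hk' k' h1 h2 u hu]
          · intro k'
            rw [hconst' k' x hxB u hu, hG1u k']
        · rcases hcls with ⟨i', hi', hk'⟩ | ⟨i', j', hij', hcyc', hi', hj', hk'⟩ |
            ⟨hcomp', hconst', hsym', hsum'⟩
          · exfalso
            refine hnm ⟨i', ?_, ?_, ?_⟩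
            · have h0 := congrArg Prod.fst (hGsum i')
              have h1 := congrArg Prod.fst (hi' x hxB)
              simp only [Prod.fst] at h0 h1
              omega
            · have h0 := congrArg Prod.snd (hGsum i')
              have h1 := congrArg Prod.snd (hi' x hxB)
              simp only [Prod.snd] at h0 h1
              omega
            · intro v' hv' hv'x
              constructor
              · rw [← hG₁F i' v' hv' hv'x]
                exact hi' v' hv'
              · intro k' hk'c
                rw [← hG₁F k' v' hv' hv'x]
                exact hk' k' hk'c v' hv'
          · intro k'
            by_cases h1 : k' = i'
            · subst h1
              rw [hi' x hxB, ← hG1u k', hi' u hu]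
            · by_cases h2 : k' = j'
              · subst h2
                rw [hj' x hxB, ← hG1u k', hj' u hu]
              · rw [hk' k' h1 h2 x hxB, ← hG1u k', hk' k' h1 h2 u hu]
          · intro k'
            rw [hconst' k' x hxB u hu, hG1u k']
      rw [hF'u k]
      have hsum := hGsum k
      rw [hkey k] at hsum
      have h1 := congrArg Prod.fst hsum
      have h2 := congrArg Prod.snd hsum
      simp only [Prod.fst, Prod.snd] at h1 h2
      refine Prod.ext ?_ ?_ <;> simp only [Prod.fst, Prod.snd] <;> omega
  · -- backward direction
    intro hhp'
    rcases hbranch with ⟨c, hmono, hF'c, hF'k⟩ | ⟨hnm, hF'u⟩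
    · set FB : Fin s → ℕ → ℕ × ℕ := fun k v => if v = x then
        (if k = c then (B.inDeg x, B.outDeg x) else (0, 0)) else F k v with hFB
      have hFBx : ∀ k', FB k' x = if k' = c then (B.inDeg x, B.outDeg x) else (0, 0) :=
        fun k' => if_pos rfl
      have hFBhard : IsHardPair s B FB := by
        refine .mono c hBbi ?_ ?_
        · intro v hv
          by_cases hvx : v = x
          · subst hvx
            simp [hFB]
          · simp only [hFB, if_neg hvx]
            exact (hmono.2.2 v hv hvx).1
        · intro k' hk' v hv
          by_cases hvx : v = x
          · subst hvx
            simp [hFB, hk']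
          · simp only [hFB, if_neg hvx]
            exact (hmono.2.2 v hv hvx).2 k' hk'
      refine IsHardPair.join B _ FB F' x hFBhard hhp' hdec.hx hdec.hV hdec.hA ?_ ?_ ?_
      · intro k v hv hvx
        simp only [hFB, if_neg hvx]
      · intro k v hv hvx
        exact (hF'v k v hv hvx).symm
      · intro k
        by_cases hkc : k = c
        · subst hkc
          rw [hF'c, hFBx k, if_pos rfl]
          have h1 := hmono.1
          have h2 := hmono.2.1
          refine Prod.ext ?_ ?_ <;> simp only [Prod.fst, Prod.snd] <;> omega
        · rw [hF'k k hkc, hFBx k, if_neg hkc]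
          refine Prod.ext ?_ ?_ <;> simp
    · set FB : Fin s → ℕ → ℕ × ℕ := fun k v => if v = x then F k u else F k v with hFB
      have hxcond : ∀ k, (F k u).1 ≤ (F k x).1 ∧ (F k u).2 ≤ (F k x).2 := by
        rcases hhard with ⟨c, hm⟩ | ⟨hcyc, i, j, hij, hi1, hi2, hj1, hj2, hvals⟩ |
          ⟨hBcomp, hconstF, hsymF, hdomF⟩
        · exact absurd ⟨c, hm⟩ hnm
        · intro k
          obtain ⟨hFi, hFj, hFo⟩ := hvals u hu hux
          by_cases hki : k = i
          · subst hki
            rw [hFi]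
            exact ⟨hi1, hi2⟩
          · by_cases hkj : k = j
            · subst hkj
              rw [hFj]
              exact ⟨hj1, hj2⟩
            · rw [hFo k hki hkj]
              simp
        · exact fun k => hdomF k u hu hux
      have hFBhard : IsHardPair s B FB := by
        rcases hhard with ⟨c, hm⟩ | ⟨hcyc, i, j, hij, hi1, hi2, hj1, hj2, hvals⟩ |
          ⟨hBcomp, hconstF, hsymF, hdomF⟩
        · exact absurd ⟨c, hm⟩ hnm
        · refine .bicycle i j hij hcyc ?_ ?_ ?_
          · intro v hv
            by_cases hvx : v = x
            · subst hvx
              simp only [hFB, if_pos rfl]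
              exact (hvals u hu hux).1
            · simp only [hFB, if_neg hvx]
              exact (hvals v hv hvx).1
          · intro v hv
            by_cases hvx : v = x
            · subst hvx
              simp only [hFB, if_pos rfl]
              exact (hvals u hu hux).2.1
            · simp only [hFB, if_neg hvx]
              exact (hvals v hv hvx).2.1
          · intro k hki hkj v hv
            by_cases hvx : v = x
            · subst hvx
              simp only [hFB, if_pos rfl]
              exact (hvals u hu hux).2.2 k hki hkj
            · simp only [hFB, if_neg hvx]
              exact (hvals v hv hvx).2.2 k hki hkj
        · have hs : ∀ w ∈ B.verts, w ≠ x → ∑ k, (F k w).2 = B.verts.card - 1 := by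
            intro w hw hwx
            rw [(htight w (hBD hw)).2, (hend.deg_local hw hwx).2,
              bidirectedComplete_outDeg hBcomp hw]
          refine .complete hBcomp ?_ ?_ ?_
          · intro k p hp q hq
            by_cases hpx : p = x <;> by_cases hqx : q = x
            · subst hpx; subst hqx; rfl
            · subst hpx
              simp only [hFB, if_pos rfl, if_neg hqx]
              exact hconstF k u hu hux q hq hqx
            · subst hqx
              simp only [hFB, if_pos rfl, if_neg hpx]
              exact hconstF k p hp hpx u hu hux
            · simp only [hFB, if_neg hpx, if_neg hqx]
              exact hconstF k p hp hpx q hq hqx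
          · intro k v hv
            by_cases hvx : v = x
            · subst hvx
              simp only [hFB, if_pos rfl]
              exact hsymF k u hu hux
            · simp only [hFB, if_neg hvx]
              exact hsymF k v hv hvx
          · intro v hv
            by_cases hvx : v = x
            · subst hvx
              simp only [hFB, if_pos rfl]
              exact hs u hu hux
            · simp only [hFB, if_neg hvx]
              exact hs v hv hvx
      refine IsHardPair.join B _ FB F' x hFBhard hhp' hdec.hx hdec.hV hdec.hA ?_ ?_ ?_
      · intro k v hv hvx
        simp only [hFB, if_neg hvx]
      · intro k v hv hvx
        exact (hF'v k v hv hvx).symm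
      · intro k
        rw [hF'u k]
        simp only [hFB, if_pos rfl]
        have := hxcond k
        refine Prod.ext ?_ ?_ <;> simp only [Prod.fst, Prod.snd] <;> omega
end
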